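/- arXiv:2010.02435 — 5 statements merged into one kernel-verified Lean document; each statement's English description precedes it below -/
import Mathlib

section
/- Let m ≥ 1 be an integer, let η > 0, t > 0, and let p, x ∈ ℝ³ satisfy |x − p| > η. Then ∫_{B_η(p)} (e^{−t|x−y|}/|x−y|) · (η² − |y − p|²)^m dy = 4π · η^{2(1+m)} · a_m(t) · e^{−t|x−p|}/|x−p|, where B_η(p) is the open ball of radius η centered at p and the integral is with respect to Lebesgue measure on ℝ³. -/
open MeasureTheory

noncomputable section

/-- `a_m(t) = (1/t) ∫₀¹ s (1 − s²)^m sinh(η t s) ds`. -/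
def aCoef (m : ℕ) (η t : ℝ) : ℝ :=
  (1 / t) * ∫ s in (0:ℝ)..1, s * (1 - s ^ 2) ^ m * Real.sinh (η * t * s)

set_option maxHeartbeats 1000000

section Aux
open Real Set

abbrev E3 := EuclideanSpace ℝ (Fin 3)

def Psi : (ℝ × ℝ × ℝ) ≃ᵐ E3 :=
  (((MeasurableEquiv.refl ℝ).prodCongr MeasurableEquiv.finTwoArrow.symm).trans
      (MeasurableEquiv.piFinSuccAbove (fun _ : Fin 3 => ℝ) 0).symm).trans
    (MeasurableEquiv.toLp 2 (Fin 3 → ℝ))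

lemma psi_mp : MeasurePreserving Psi := by
  have h1 : MeasurePreserving
      (⇑((MeasurableEquiv.refl ℝ).prodCongr MeasurableEquiv.finTwoArrow.symm))
      (volume : Measure (ℝ × ℝ × ℝ)) volume :=
    (MeasurePreserving.id volume).prod ((volume_preserving_finTwoArrow ℝ).symm _)
  have h2 := (volume_preserving_piFinSuccAbove (fun _ : Fin 3 => ℝ) 0).symm
    (MeasurableEquiv.piFinSuccAbove (fun _ : Fin 3 => ℝ) 0)
  have h3 := (EuclideanSpace.volume_preserving_symm_measurableEquiv_toLp (Fin 3)).symm
    (MeasurableEquiv.toLp 2 (Fin 3 → ℝ)).symm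
  exact (h3.comp (h2.comp h1))

lemma psi_norm (z : ℝ × ℝ × ℝ) : ‖Psi z‖ = Real.sqrt (z.1^2 + z.2.1^2 + z.2.2^2) := by
  rw [EuclideanSpace.norm_eq, Fin.sum_univ_three]
  show √(‖z.1‖^2 + ‖z.2.1‖^2 + ‖z.2.2‖^2) = √(z.1^2 + z.2.1^2 + z.2.2^2)
  simp [Real.norm_eq_abs, sq_abs]

/-- integrand in cylindrical-type coordinates (a, ρ). -/
def Hfun (m : ℕ) (η t R : ℝ) : ℝ × ℝ → ℝ :=
  Set.indicator {w : ℝ × ℝ | w.1 ^ 2 + w.2 ^ 2 < η ^ 2}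
    (fun w => Real.exp (-t * Real.sqrt ((R - w.1) ^ 2 + w.2 ^ 2)) /
        Real.sqrt ((R - w.1) ^ 2 + w.2 ^ 2) * (η ^ 2 - (w.1 ^ 2 + w.2 ^ 2)) ^ m)

def Gfun (m : ℕ) (η t R : ℝ) : ℝ × ℝ × ℝ → ℝ := fun z =>
  Hfun m η t R (z.1, Real.sqrt (z.2.1 ^ 2 + z.2.2 ^ 2))

def Kfun (m : ℕ) (η t R : ℝ) : ℝ × ℝ → ℝ :=
  Set.indicator {w : ℝ × ℝ | 0 < w.2} (fun w => w.2 * Hfun m η t R w)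

lemma hH_meas (m : ℕ) (η t R : ℝ) : Measurable (Hfun m η t R) := by
  apply Measurable.indicator
  · apply Measurable.mul
    · apply Measurable.div
      · exact (Real.continuous_exp.comp (continuous_const.mul
          (Real.continuous_sqrt.comp (by continuity)))).measurable
      · exact (Real.continuous_sqrt.comp (by continuity)).measurable
    · exact ((continuous_const.sub (by continuity)).pow m).measurable
  · exact (isOpen_lt (by continuity) continuous_const).measurableSet

lemma hH_bound (m : ℕ) (η t R : ℝ) (hη : 0 < η) (ht : 0 < t) (hR : η < R) (w : ℝ × ℝ)
    (hw : |w.1| ≤ η) : |Hfun m η t R w| ≤ (η ^ 2) ^ m / (R - η) := by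
  rw [Hfun, Set.indicator_apply]
  split_ifs with h
  · simp only [Set.mem_setOf_eq] at h
    have hd : R - η ≤ Real.sqrt ((R - w.1) ^ 2 + w.2 ^ 2) := by
      refine le_trans ?_ (Real.sqrt_le_sqrt (le_add_of_nonneg_right (sq_nonneg w.2)))
      rw [Real.sqrt_sq_eq_abs]
      calc R - η ≤ R - w.1 := by linarith [abs_le.mp hw]
      _ ≤ |R - w.1| := le_abs_self _
    have hd0 : (0:ℝ) < R - η := by linarith
    have hnum : Real.exp (-t * Real.sqrt ((R - w.1) ^ 2 + w.2 ^ 2)) ≤ 1 := by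
      apply Real.exp_le_one_iff.mpr
      have := Real.sqrt_nonneg ((R - w.1) ^ 2 + w.2 ^ 2)
      nlinarith
    have hpow : |(η ^ 2 - (w.1 ^ 2 + w.2 ^ 2)) ^ m| ≤ (η ^ 2) ^ m := by
      rw [abs_pow]
      apply pow_le_pow_left₀ (abs_nonneg _)
      rw [abs_le]
      constructor <;> nlinarith [sq_nonneg w.1, sq_nonneg w.2]
    rw [abs_mul, abs_div]
    have h1 : |Real.exp (-t * Real.sqrt ((R - w.1) ^ 2 + w.2 ^ 2))| ≤ 1 := by
      rw [abs_of_pos (Real.exp_pos _)]; exact hnum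
    have h2 : R - η ≤ |Real.sqrt ((R - w.1) ^ 2 + w.2 ^ 2)| :=
      le_trans hd (le_abs_self _)
    calc |Real.exp (-t * Real.sqrt ((R - w.1) ^ 2 + w.2 ^ 2))| /
          |Real.sqrt ((R - w.1) ^ 2 + w.2 ^ 2)| * |(η ^ 2 - (w.1 ^ 2 + w.2 ^ 2)) ^ m|
        ≤ (1 / (R - η)) * (η ^ 2) ^ m := by
          apply mul_le_mul _ hpow (abs_nonneg _) (by positivity)
          exact div_le_div₀ zero_le_one h1 hd0 h2
      _ = (η ^ 2) ^ m / (R - η) := by ring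
  · have h0 : (0:ℝ) < R - η := by linarith
    simp only [abs_zero]
    positivity

lemma hK_int (m : ℕ) (η t R : ℝ) (hη : 0 < η) (ht : 0 < t) (hR : η < R) :
    Integrable (Kfun m η t R) := by
  have hRη : (0:ℝ) < R - η := by linarith
  have hCnn : (0:ℝ) ≤ η * ((η ^ 2) ^ m / (R - η)) := by positivity
  have hmeas : Measurable (Kfun m η t R) :=
    Measurable.indicator (measurable_snd.mul (hH_meas m η t R))
      (isOpen_lt continuous_const continuous_snd).measurableSet
  refine Integrable.mono'
    (g := Set.indicator (Set.Icc ((-η, 0):ℝ×ℝ) ((η, η):ℝ×ℝ))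
      (fun _ => η * ((η ^ 2) ^ m / (R - η)))) ?_ hmeas.aestronglyMeasurable ?_
  · rw [integrable_indicator_iff measurableSet_Icc]
    exact integrableOn_const isCompact_Icc.measure_lt_top.ne
  · filter_upwards with w
    rw [Real.norm_eq_abs, Kfun, Set.indicator_apply]
    have hind_nn : 0 ≤ Set.indicator (Set.Icc ((-η, 0):ℝ×ℝ) ((η, η):ℝ×ℝ))
        (fun _ => η * ((η ^ 2) ^ m / (R - η))) w :=
      Set.indicator_nonneg (fun _ _ => hCnn) w
    split_ifs with h
    · simp only [Set.mem_setOf_eq] at h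
      by_cases hball : w.1 ^ 2 + w.2 ^ 2 < η ^ 2
      · have h1 : |w.1| ≤ η := by
          rw [abs_le]; constructor <;> nlinarith [sq_nonneg w.2]
        have h2 : w.2 ≤ η := by nlinarith [sq_nonneg w.1]
        have hmem : w ∈ Set.Icc ((-η, 0):ℝ×ℝ) ((η, η):ℝ×ℝ) := by
          rw [Set.mem_Icc]
          constructor <;> constructor
          · exact (abs_le.mp h1).1
          · exact h.le
          · exact (abs_le.mp h1).2
          · exact h2
        rw [Set.indicator_of_mem hmem]
        rw [abs_mul]
        apply mul_le_mul _ (hH_bound m η t R hη ht hR w h1) (abs_nonneg _) hη.le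
        rw [abs_of_pos h]; exact h2
      · have : Hfun m η t R w = 0 := by
          rw [Hfun, Set.indicator_apply]
          simp only [Set.mem_setOf_eq]
          exact if_neg hball
        rw [this, mul_zero, abs_zero]
        exact hind_nn
    · rw [abs_zero]; exact hind_nn

lemma rIntegral (m : ℕ) (η t : ℝ) (hη : 0 < η) (ht : 0 < t) :
    ∫ r in (0:ℝ)..η, r * (η ^ 2 - r ^ 2) ^ m * Real.sinh (t * r)
      = η ^ (2 * (1 + m)) * (t * aCoef m η t) := by
  have h := intervalIntegral.integral_comp_mul_left (a := (0:ℝ)) (b := (1:ℝ))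
    (fun r => r * (η ^ 2 - r ^ 2) ^ m * Real.sinh (t * r)) hη.ne'
  rw [mul_zero, mul_one] at h
  have hta : t * aCoef m η t = ∫ s in (0:ℝ)..1, s * (1 - s ^ 2) ^ m * Real.sinh (η * t * s) := by
    rw [aCoef, ← mul_assoc, mul_one_div, div_self ht.ne', one_mul]
  rw [hta]
  have h2 : (∫ r in (0:ℝ)..η, r * (η ^ 2 - r ^ 2) ^ m * Real.sinh (t * r))
      = η * ∫ s in (0:ℝ)..1, (η * s) * (η ^ 2 - (η*s) ^ 2) ^ m * Real.sinh (t * (η*s)) := by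
    rw [h, smul_eq_mul, ← mul_assoc, mul_inv_cancel₀ hη.ne', one_mul]
  rw [h2, ← intervalIntegral.integral_const_mul, ← intervalIntegral.integral_const_mul]
  apply intervalIntegral.integral_congr
  intro s _

  show η * (η * s * (η ^ 2 - (η * s) ^ 2) ^ m * Real.sinh (t * (η * s))) = η ^ (2 * (1 + m)) * (s * (1 - s ^ 2) ^ m * Real.sinh (η * t * s))
  rw [show η ^ 2 - (η * s) ^ 2 = η ^ 2 * (1 - s ^ 2) from by ring, mul_pow, show t * (η * s) = η * t * s from by ring, pow_mul]
  ring

lemma thetaIntegral (t R r : ℝ) (ht : 0 < t) (hr : 0 < r) (hrR : r < R) :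
    ∫ θ in (0:ℝ)..π, Real.sin θ *
        (Real.exp (-t * Real.sqrt (R^2 - 2*R*r*Real.cos θ + r^2)) /
          Real.sqrt (R^2 - 2*R*r*Real.cos θ + r^2))
      = (Real.exp (-(t*(R-r))) - Real.exp (-(t*(R+r)))) / (t*R*r) := by
  have hR : 0 < R := hr.trans hrR
  set c : ℝ → ℝ := fun θ => R^2 - 2*R*r*Real.cos θ + r^2 with hc_def
  have hcpos : ∀ θ : ℝ, 0 < c θ := by
    intro θ
    have h1 := Real.cos_le_one θ
    show 0 < R^2 - 2*R*r*Real.cos θ + r^2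
    nlinarith [mul_le_mul_of_nonneg_left h1 (by positivity : (0:ℝ) ≤ 2*R*r),
      mul_pos (sub_pos.mpr hrR) (sub_pos.mpr hrR)]
  have hderiv : ∀ θ ∈ Set.uIcc (0:ℝ) π, HasDerivAt
      (fun θ => -(1/(t*R*r)) * Real.exp (-t * Real.sqrt (c θ)))
      (Real.sin θ * (Real.exp (-t * Real.sqrt (c θ)) / Real.sqrt (c θ))) θ := by
    intro θ _
    have hc : HasDerivAt c (2*R*r*Real.sin θ) θ := by
      have h1 := (Real.hasDerivAt_cos θ).const_mul (2*R*r)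
      have h2 : HasDerivAt (fun θ => R^2 - 2*R*r*Real.cos θ + r^2) (0 - 2*R*r*(-Real.sin θ)) θ :=
        ((hasDerivAt_const θ (R^2)).sub h1).add_const (r^2)
      convert h2 using 1
      ring
    have hsq : HasDerivAt (fun θ => Real.sqrt (c θ))
        (1/(2*Real.sqrt (c θ)) * (2*R*r*Real.sin θ)) θ :=
      (Real.hasDerivAt_sqrt (hcpos θ).ne').comp θ hc
    have hexp : HasDerivAt (fun θ => -(1/(t*R*r)) * Real.exp (-t * Real.sqrt (c θ)))
        (-(1/(t*R*r)) * (Real.exp (-t * Real.sqrt (c θ)) *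
          (-t * (1/(2*Real.sqrt (c θ)) * (2*R*r*Real.sin θ))))) θ :=
      ((hsq.const_mul (-t)).exp).const_mul (-(1/(t*R*r)))
    convert hexp using 1
    have hs : Real.sqrt (c θ) ≠ 0 := (Real.sqrt_pos.mpr (hcpos θ)).ne'
    field_simp
  have hcont : IntervalIntegrable (fun θ => Real.sin θ *
      (Real.exp (-t * Real.sqrt (c θ)) / Real.sqrt (c θ))) volume 0 π := by
    apply ContinuousOn.intervalIntegrable
    apply ContinuousOn.mul Real.continuous_sin.continuousOn
    apply ContinuousOn.div
    · exact (Real.continuous_exp.comp (continuous_const.mul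
        (Real.continuous_sqrt.comp (by continuity)))).continuousOn
    · exact (Real.continuous_sqrt.comp (by continuity)).continuousOn
    · exact fun θ _ => (Real.sqrt_pos.mpr (hcpos θ)).ne'
  have := intervalIntegral.integral_eq_sub_of_hasDerivAt hderiv hcont
  rw [this]
  have hc0 : c 0 = (R - r)^2 := by simp [hc_def]; ring
  have hcpi : c π = (R + r)^2 := by simp [hc_def]; ring
  rw [hc0, hcpi, Real.sqrt_sq (by linarith), Real.sqrt_sq (by linarith)]
  have : t*R*r ≠ 0 := by positivity
  field_simp
  ring

lemma keyIntegral (m : ℕ) (η t R : ℝ) (hη : 0 < η) (ht : 0 < t) (hR : η < R)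
    (hGint : Integrable (Gfun m η t R)) :
    ∫ z : ℝ × ℝ × ℝ, Gfun m η t R z
      = 4 * π * η ^ (2 * (1 + m)) * aCoef m η t * (Real.exp (-t * R) / R) := by
  have hR0 : 0 < R := hη.trans hR
  -- the function after the second polar transformation
  set F2 : ℝ × ℝ → ℝ := fun pq =>
    pq.1 ^ 2 * Real.sin pq.2 *
      (Real.exp (-t * Real.sqrt (R ^ 2 - 2 * R * pq.1 * Real.cos pq.2 + pq.1 ^ 2)) /
        Real.sqrt (R ^ 2 - 2 * R * pq.1 * Real.cos pq.2 + pq.1 ^ 2) * (η ^ 2 - pq.1 ^ 2) ^ m)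
    with hF2_def
  -- Step A : Fubini
  rw [Measure.volume_eq_prod] at hGint ⊢
  rw [integral_prod _ hGint]
  -- Step B : polar coordinates in the inner two variables
  have hinner : ∀ a : ℝ, (∫ q : ℝ × ℝ, Gfun m η t R (a, q))
      = (∫ ρ in Set.Ioi (0:ℝ), ρ * Hfun m η t R (a, ρ)) * (2 * π) := by
    intro a
    rw [← integral_comp_polarCoord_symm (fun q => Gfun m η t R (a, q))]
    have hcongr : Set.EqOn
        (fun pq : ℝ × ℝ => pq.1 • Gfun m η t R (a, polarCoord.symm pq))
        (fun pq : ℝ × ℝ => (fun ρ => ρ * Hfun m η t R (a, ρ)) pq.1 * (fun _ => (1:ℝ)) pq.2)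
        polarCoord.target := by
      rintro ⟨ρ, φ⟩ hpq
      rw [polarCoord_target] at hpq
      have hρ : 0 < ρ := hpq.1
      simp only [smul_eq_mul, mul_one]
      congr 1
      rw [Gfun]
      have h1 : (polarCoord.symm (ρ, φ)).1 ^ 2 + (polarCoord.symm (ρ, φ)).2 ^ 2 = ρ ^ 2 := by
        simp only [polarCoord_symm_apply]
        rw [mul_pow, mul_pow, ← mul_add, Real.cos_sq_add_sin_sq, mul_one]
      rw [h1, Real.sqrt_sq hρ.le]
    rw [setIntegral_congr_fun polarCoord.open_target.measurableSet hcongr, polarCoord_target,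
      Measure.volume_eq_prod]
    rw [setIntegral_prod_mul (fun ρ => ρ * Hfun m η t R (a, ρ)) (fun _ => (1:ℝ))]
    have h2 : (∫ _ in Set.Ioo (-π) π, (1:ℝ)) = 2 * π := by
      rw [setIntegral_const, Real.volume_real_Ioo_of_le (by linarith [Real.pi_pos]), smul_eq_mul,
        mul_one]
      ring
    rw [h2]
  simp_rw [hinner]
  rw [integral_mul_const]
  -- Step C : rewrite inner integral via Kfun
  have hKrep : ∀ a : ℝ, (∫ ρ in Set.Ioi (0:ℝ), ρ * Hfun m η t R (a, ρ))
      = ∫ ρ, Kfun m η t R (a, ρ) := by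
    intro a
    rw [← integral_indicator measurableSet_Ioi]
    congr 1
  simp_rw [hKrep]
  have hKint := hK_int m η t R hη ht hR
  rw [Measure.volume_eq_prod] at hKint
  rw [← integral_prod _ hKint, ← Measure.volume_eq_prod,
    ← integral_comp_polarCoord_symm (Kfun m η t R)]
  -- Step D : identify the integrand on the target
  have hstep : Set.EqOn (fun pq : ℝ × ℝ => pq.1 • Kfun m η t R (polarCoord.symm pq))
      (fun pq => Set.indicator (Set.Ioo (0:ℝ) η ×ˢ Set.Ioo (0:ℝ) π) F2 pq)
      polarCoord.target := by
    rintro ⟨r, θ⟩ h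
    rw [polarCoord_target] at h
    have hr : 0 < r := h.1
    have hθ : θ ∈ Set.Ioo (-π) π := h.2
    simp only [Kfun, Hfun, Set.indicator_apply, Set.mem_setOf_eq, polarCoord_symm_apply,
      smul_eq_mul, Set.mem_prod, Set.mem_Ioo, hF2_def]
    have hsq : r * Real.cos θ * (r * Real.cos θ) + r * Real.sin θ * (r * Real.sin θ) = r ^ 2 := by
      have := Real.cos_sq_add_sin_sq θ; nlinarith [this]
    have hsq' : (r * Real.cos θ) ^ 2 + (r * Real.sin θ) ^ 2 = r ^ 2 := by
      rw [mul_pow, mul_pow, ← mul_add, Real.cos_sq_add_sin_sq, mul_one]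
    have hd : (R - r * Real.cos θ) ^ 2 + (r * Real.sin θ) ^ 2
        = R ^ 2 - 2 * R * r * Real.cos θ + r ^ 2 := by
      have h1 := Real.cos_sq_add_sin_sq θ
      nlinarith [h1]
    by_cases hθ1 : 0 < θ ∧ θ < π
    · have hsinpos : 0 < Real.sin θ := Real.sin_pos_of_pos_of_lt_pi hθ1.1 hθ1.2
      rw [if_pos (by positivity)]
      by_cases hrη : r < η
      · have : (r * Real.cos θ) ^ 2 + (r * Real.sin θ) ^ 2 < η ^ 2 := by
          rw [hsq']; nlinarith
        rw [if_pos this, if_pos ⟨⟨hr, hrη⟩, hθ1⟩, hsq', hd]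
        ring
      · have : ¬ ((r * Real.cos θ) ^ 2 + (r * Real.sin θ) ^ 2 < η ^ 2) := by
          rw [hsq']
          push_neg at hrη ⊢
          nlinarith
        rw [if_neg this, if_neg (by tauto)]
        ring
    · have hθle : θ ≤ 0 := by
        by_contra hc
        push_neg at hc
        exact hθ1 ⟨hc, hθ.2⟩
      have hsinle : Real.sin θ ≤ 0 := by
        have h0 : (0:ℝ) ≤ Real.sin (-θ) :=
          Real.sin_nonneg_of_nonneg_of_le_pi (by linarith) (by linarith [hθ.1])
        rw [Real.sin_neg] at h0
        linarith
      rw [if_neg (by nlinarith), if_neg (by tauto)]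
      ring
  rw [setIntegral_congr_fun polarCoord.open_target.measurableSet hstep,
    setIntegral_indicator (measurableSet_Ioo.prod measurableSet_Ioo),
    polarCoord_target,
    Set.inter_eq_self_of_subset_right
      (Set.prod_mono Set.Ioo_subset_Ioi_self (Set.Ioo_subset_Ioo_left (by linarith [Real.pi_pos])))]
  -- Step E : Fubini on the rectangle
  have hF2int : IntegrableOn F2 (Set.Ioo (0:ℝ) η ×ˢ Set.Ioo (0:ℝ) π) volume := by
    have hne : ∀ pq : ℝ × ℝ, pq ∈ Set.Icc (0:ℝ) η ×ˢ Set.Icc (0:ℝ) π →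
        Real.sqrt (R ^ 2 - 2 * R * pq.1 * Real.cos pq.2 + pq.1 ^ 2) ≠ 0 := by
      rintro ⟨r, θ⟩ hmem
      have h1 : 0 ≤ r := hmem.1.1
      have h2 : r ≤ η := hmem.1.2
      have h3 := Real.cos_le_one θ
      have hpos : 0 < R ^ 2 - 2 * R * r * Real.cos θ + r ^ 2 := by
        nlinarith [mul_le_mul_of_nonneg_left h3 (by positivity : (0:ℝ) ≤ 2*R*r),
          mul_pos (show (0:ℝ) < R - r by linarith) (show (0:ℝ) < R - r by linarith)]
      exact (Real.sqrt_pos.mpr hpos).ne'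
    have hc0 : Continuous fun pq : ℝ × ℝ => R ^ 2 - 2 * R * pq.1 * Real.cos pq.2 + pq.1 ^ 2 :=
      (continuous_const.sub ((continuous_const.mul continuous_fst).mul
        (Real.continuous_cos.comp continuous_snd))).add (continuous_fst.pow 2)
    have hcont : ContinuousOn F2 (Set.Icc (0:ℝ) η ×ˢ Set.Icc (0:ℝ) π) :=
      ContinuousOn.mul
        ((continuous_fst.pow 2).mul
          (Real.continuous_sin.comp continuous_snd)).continuousOn
        (ContinuousOn.mul
          (ContinuousOn.div
            (Real.continuous_exp.comp
              (continuous_const.mul (Real.continuous_sqrt.comp hc0))).continuousOn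
            (Real.continuous_sqrt.comp hc0).continuousOn hne)
          ((continuous_const.sub (continuous_fst.pow 2)).pow m).continuousOn)
    exact (hcont.integrableOn_compact (isCompact_Icc.prod isCompact_Icc)).mono_set
      (Set.prod_mono Set.Ioo_subset_Icc_self Set.Ioo_subset_Icc_self)
  rw [Measure.volume_eq_prod] at hF2int ⊢
  rw [setIntegral_prod _ hF2int]
  -- Step F : the θ integral
  have hθint : Set.EqOn (fun r => ∫ θ in Set.Ioo (0:ℝ) π, F2 (r, θ))
      (fun r => (2 * Real.exp (-t * R) / (t * R)) *
        (r * (η ^ 2 - r ^ 2) ^ m * Real.sinh (t * r))) (Set.Ioo 0 η) := by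
    intro r hr
    have h1 : (fun θ => F2 (r, θ)) = fun θ => (r ^ 2 * (η ^ 2 - r ^ 2) ^ m) *
        (Real.sin θ * (Real.exp (-t * Real.sqrt (R ^ 2 - 2 * R * r * Real.cos θ + r ^ 2)) /
          Real.sqrt (R ^ 2 - 2 * R * r * Real.cos θ + r ^ 2))) := by
      funext θ; simp only [hF2_def]; ring
    simp only [h1]
    rw [integral_const_mul, ← integral_Ioc_eq_integral_Ioo,
      ← intervalIntegral.integral_of_le Real.pi_pos.le,
      thetaIntegral t R r ht hr.1 (hr.2.trans hR)]
    have hr0 : r ≠ 0 := hr.1.ne'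
    have he1 : Real.exp (-(t * (R - r))) = Real.exp (-t * R) * Real.exp (t * r) := by
      rw [← Real.exp_add]; ring_nf
    have he2 : Real.exp (-(t * (R + r))) = Real.exp (-t * R) * Real.exp (-(t * r)) := by
      rw [← Real.exp_add]; ring_nf
    rw [he1, he2, Real.sinh_eq]
    field_simp
  rw [setIntegral_congr_fun measurableSet_Ioo hθint, integral_const_mul,
    ← integral_Ioc_eq_integral_Ioo, ← intervalIntegral.integral_of_le hη.le,
    rIntegral m η t hη ht]
  field_simp
  ring

end Aux

theorem stmt_0 (m : ℕ) (hm : 1 ≤ m) (η t : ℝ) (hη : 0 < η) (ht : 0 < t)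
    (p x : EuclideanSpace ℝ (Fin 3)) (hx : η < ‖x - p‖) :
    (∫ y in Metric.ball p η,
        Real.exp (-t * ‖x - y‖) / ‖x - y‖ * (η ^ 2 - ‖y - p‖ ^ 2) ^ m)
      = 4 * Real.pi * η ^ (2 * (1 + m)) * aCoef m η t *
          (Real.exp (-t * ‖x - p‖) / ‖x - p‖) := by
  classical
  set R : ℝ := ‖x - p‖ with hR_def
  have hR0 : 0 < R := hη.trans hx
  set f : E3 → ℝ :=
    fun y => Real.exp (-t * ‖x - y‖) / ‖x - y‖ * (η ^ 2 - ‖y - p‖ ^ 2) ^ m with hf_def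
  set v : E3 := x - p with hv_def
  set w : E3 := EuclideanSpace.single (0 : Fin 3) R with hw_def
  have hwv : ‖w‖ = ‖v‖ := by
    rw [hw_def, EuclideanSpace.norm_single, Real.norm_eq_abs, abs_of_pos hR0]
  set e := Submodule.reflection (Submodule.span ℝ {w - v})ᗮ with he_def
  have hew : e w = v := Submodule.reflection_sub hwv
  set T : (ℝ × ℝ × ℝ) ≃ᵐ E3 :=
    Psi.trans ((e.toHomeomorph.toMeasurableEquiv).trans (MeasurableEquiv.addLeft p))
    with hT_def
  have hT : MeasurePreserving T := by
    have h1 : MeasurePreserving (⇑e) (volume : Measure E3) volume :=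
      e.measurePreserving
    have h2 : MeasurePreserving (⇑(MeasurableEquiv.addLeft p)) (volume : Measure E3) volume :=
      measurePreserving_add_left volume p
    exact (h2.comp (h1.comp psi_mp))
  have hTapp : ∀ z : ℝ × ℝ × ℝ, T z = p + e (Psi z) := fun z => rfl
  -- pointwise identification
  have hTz : ∀ z : ℝ × ℝ × ℝ,
      (Metric.ball p η).indicator f (T z) = Gfun m η t R z := by
    intro z
    have hxz : ‖x - T z‖ = Real.sqrt ((R - z.1)^2 + (z.2.1^2 + z.2.2^2)) := by
      have h1 : x - T z = e (w - Psi z) := by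
        rw [hTapp z, map_sub, hew]
        rw [hv_def]
        abel
      have h2 : w - Psi z = Psi ((R, (0, 0)) - z) := by
        have hw2 : w = Psi (R, (0, 0)) := by
          rw [hw_def]
          ext i
          fin_cases i
          · rfl
          · show EuclideanSpace.single (0 : Fin 3) R 1 = (0:ℝ)
            simp [EuclideanSpace.single_apply]
          · show EuclideanSpace.single (0 : Fin 3) R 2 = (0:ℝ)
            simp [EuclideanSpace.single_apply]
        rw [hw2]
        ext i
        fin_cases i <;> rfl
      rw [h1, e.norm_map, h2, psi_norm]
      have : ((R, ((0:ℝ), (0:ℝ))) - z) = (R - z.1, (-z.2.1, -z.2.2)) := by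
        ext <;> simp
      rw [this]
      norm_num
      ring_nf
    have hzp : ‖T z - p‖ = Real.sqrt (z.1^2 + z.2.1^2 + z.2.2^2) := by
      rw [hTapp z, add_sub_cancel_left, e.norm_map, psi_norm]
    have hmem : T z ∈ Metric.ball p η ↔ z.1^2 + (z.2.1^2 + z.2.2^2) < η^2 := by
      rw [Metric.mem_ball, dist_eq_norm, hzp, show z.1^2 + z.2.1^2 + z.2.2^2
        = z.1^2 + (z.2.1^2 + z.2.2^2) from by ring]
      exact Real.sqrt_lt' hη
    have hsq : Real.sqrt (z.2.1 ^ 2 + z.2.2 ^ 2) ^ 2 = z.2.1 ^ 2 + z.2.2 ^ 2 :=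
      Real.sq_sqrt (by positivity)
    rw [Gfun, Hfun, Set.indicator_apply, Set.indicator_apply]
    simp only [Set.mem_setOf_eq, hsq]
    rw [hmem]
    split_ifs with h
    · rw [hf_def]
      simp only
      rw [hxz, hzp]
      rw [Real.sq_sqrt (by positivity : (0:ℝ) ≤ z.1^2 + z.2.1^2 + z.2.2^2)]
      ring_nf
    · rfl
  have hf_int : IntegrableOn f (Metric.ball p η) volume := by
    have hne : ∀ y ∈ Metric.closedBall p η, ‖x - y‖ ≠ 0 := by
      intro y hy
      rw [Metric.mem_closedBall, dist_eq_norm] at hy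
      have h1 : dist x p ≤ dist x y + dist y p := dist_triangle x y p
      rw [dist_eq_norm, dist_eq_norm, dist_eq_norm] at h1
      have h2 : (0:ℝ) < ‖x - y‖ := by
        have hxp : η < ‖x - p‖ := hx
        linarith
      exact h2.ne'
    have hnorm1 : Continuous fun y : E3 => ‖x - y‖ := (continuous_const.sub continuous_id).norm
    have hnorm2 : Continuous fun y : E3 => ‖y - p‖ := (continuous_id.sub continuous_const).norm
    have hcont : ContinuousOn f (Metric.closedBall p η) :=
      ContinuousOn.mul
        (ContinuousOn.div
          (Real.continuous_exp.comp (continuous_const.mul hnorm1)).continuousOn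
          hnorm1.continuousOn hne)
        ((continuous_const.sub (hnorm2.pow 2)).pow m).continuousOn
    exact (hcont.integrableOn_compact (isCompact_closedBall p η)).mono_set
      Metric.ball_subset_closedBall
  have hGint : Integrable (Gfun m η t R) volume := by
    have h2 : Integrable ((Metric.ball p η).indicator f) volume :=
      (integrable_indicator_iff Metric.isOpen_ball.measurableSet).mpr hf_int
    have h3 : Integrable (((Metric.ball p η).indicator f) ∘ T) volume :=
      (hT.integrable_comp_emb T.measurableEmbedding).mpr h2
    have h4 : ((Metric.ball p η).indicator f) ∘ T = Gfun m η t R := funext hTz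
    rwa [h4] at h3
  calc (∫ y in Metric.ball p η, f y)
      = ∫ y, (Metric.ball p η).indicator f y :=
        (integral_indicator Metric.isOpen_ball.measurableSet).symm
    _ = ∫ z, (Metric.ball p η).indicator f (T z) :=
        (hT.integral_comp T.measurableEmbedding _).symm
    _ = ∫ z, Gfun m η t R z := by simp_rw [hTz]
    _ = 4 * Real.pi * η ^ (2 * (1 + m)) * aCoef m η t * (Real.exp (-t * R) / R) :=
        keyIntegral m η t R hη ht hx hGint
end
end

section
/- Let m ≥ 1 be an integer and η > 0. Then, as t → ∞, a_m(t) is asymptotically equivalent to η · 2^{m−1} · m! · e^{tη}/(tη)^{m+2}; that is, the ratio a_m(t) · (tη)^{m+2} e^{−tη} / (η · 2^{m−1} · m!) tends to 1 as t → ∞. -/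
open MeasureTheory Filter Set

noncomputable section

private lemma subst_lemma (m : ℕ) (x : ℝ) (hx : 0 < x) :
    (∫ s in (0:ℝ)..1, s * (1 - s ^ 2) ^ m * Real.exp (x * s)) * x ^ (m + 1) * Real.exp (-x)
      = ∫ u in (0:ℝ)..x, (1 - u / x) * (2 - u / x) ^ m * u ^ m * Real.exp (-u) := by
  have hx0 : x ≠ 0 := ne_of_gt hx
  set h : ℝ → ℝ := fun v => (1 - v) * (2 - v) ^ m * (v * x) ^ m * Real.exp (-(v * x)) with hh
  have e1 : (∫ u in (0:ℝ)..x, (1 - u / x) * (2 - u / x) ^ m * u ^ m * Real.exp (-u))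
      = ∫ u in (0:ℝ)..x, h (u / x) := by
    refine intervalIntegral.integral_congr fun u _ => ?_
    simp only [hh, div_mul_cancel₀ _ hx0]
  rw [e1, intervalIntegral.integral_comp_div (f := h) hx0, zero_div, div_self hx0]
  have e2 : (∫ v in (0:ℝ)..1, h v) = ∫ s in (0:ℝ)..1, h (1 - s) := by
    rw [intervalIntegral.integral_comp_sub_left h 1]
    norm_num
  rw [e2]
  have e3 : ∀ s : ℝ, h (1 - s) = (x ^ m * Real.exp (-x)) * (s * (1 - s ^ 2) ^ m * Real.exp (x * s)) := by
    intro s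
    simp only [hh]
    rw [show -((1 - s) * x) = x * s + -x by ring, Real.exp_add]
    rw [show (2 - (1 - s)) = 1 + s by ring, show ((1 - s) * x) ^ m = (1-s)^m * x^m by rw [mul_pow]]
    rw [show (1 - (1-s)) = s by ring]
    rw [show s * (1+s)^m * ((1-s)^m * x^m) * (Real.exp (x*s) * Real.exp (-x))
        = (x^m * Real.exp (-x)) * (s * ((1+s)*(1-s))^m * Real.exp (x*s)) by rw [mul_pow]; ring]
    rw [show ∀ s:ℝ, (1+s)*(1-s) = 1 - s^2 from fun s => by ring]
  simp only [e3]
  rw [intervalIntegral.integral_const_mul]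
  rw [smul_eq_mul]
  ring

private lemma dct_lemma (m : ℕ) :
    Tendsto (fun x : ℝ => ∫ u in (0:ℝ)..x, (1 - u / x) * (2 - u / x) ^ m * u ^ m * Real.exp (-u))
      atTop (nhds (2 ^ m * m.factorial)) := by
  set f : ℝ → ℝ := fun u => 2 ^ m * u ^ m * Real.exp (-u) with hf
  set F : ℝ → ℝ → ℝ := fun x u =>
    Set.indicator (Ioc (0:ℝ) x) (fun u => (1 - u / x) * (2 - u / x) ^ m * u ^ m * Real.exp (-u)) u
    with hF
  have hint : IntegrableOn f (Ioi 0) := by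
    have base : IntegrableOn (fun y : ℝ => Real.exp (-y) * y ^ m) (Ioi 0) := by
      refine (Real.GammaIntegral_convergent (s := m + 1) (by positivity)).congr_fun
        (fun y hy => ?_) measurableSet_Ioi
      rw [add_sub_cancel_right]; simp only [Real.rpow_natCast]
    exact (base.const_mul (2 ^ m)).congr (ae_of_all _ fun y => by simp only [hf]; ring)
  have hbound : Integrable (Set.indicator (Ioi (0:ℝ)) f) := by
    rwa [integrable_indicator_iff measurableSet_Ioi]
  have key : Tendsto (fun x : ℝ => ∫ u, F x u) atTop (nhds (∫ u, Set.indicator (Ioi (0:ℝ)) f u)) := by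
    refine tendsto_integral_filter_of_dominated_convergence (Set.indicator (Ioi (0:ℝ)) f)
      ?_ ?_ hbound ?_
    · filter_upwards with x
      exact (((continuous_const.sub (continuous_id.div_const x)).mul
        ((continuous_const.sub (continuous_id.div_const x)).pow m)).mul
        (continuous_pow m) |>.mul (Real.continuous_exp.comp continuous_neg)).aestronglyMeasurable.indicator
        measurableSet_Ioc
    · filter_upwards [eventually_ge_atTop (1:ℝ)] with x hx1
      filter_upwards with u
      by_cases hu : u ∈ Ioc (0:ℝ) x
      · have hx : 0 < x := lt_of_lt_of_le one_pos hx1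
        have h1 : 0 < u / x := div_pos hu.1 hx
        have h2 : u / x ≤ 1 := (div_le_one hx).2 hu.2
        rw [hF]
        simp only [Set.indicator_of_mem hu]
        have h3 : 0 ≤ (1 - u/x) := by linarith
        have h4 : (1 - u/x) ≤ 1 := by linarith
        have h5 : (0:ℝ) ≤ 2 - u/x := by linarith
        have h6 : (2:ℝ) - u/x ≤ 2 := by linarith
        have hu0 : (0:ℝ) ≤ u := le_of_lt hu.1
        have hful : u ∈ Ioi (0:ℝ) := hu.1
        rw [Set.indicator_of_mem hful, hf]
        rw [Real.norm_eq_abs, abs_of_nonneg (by positivity)]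
        have : (1 - u/x) * (2 - u/x) ^ m ≤ 1 * 2 ^ m :=
          mul_le_mul h4 (pow_le_pow_left₀ h5 h6 m) (by positivity) zero_le_one
        nlinarith [pow_nonneg hu0 m, Real.exp_pos (-u), mul_le_mul_of_nonneg_right this
          (mul_nonneg (pow_nonneg hu0 m) (Real.exp_pos (-u)).le)]
      · rw [hF]; simp only [Set.indicator_of_notMem hu, norm_zero]
        refine Set.indicator_apply_nonneg (fun hy => ?_)
        have h0u : (0:ℝ) < u := hy
        rw [hf]; positivity
    · filter_upwards [compl_mem_ae_iff.2 (measure_singleton (0:ℝ))] with u hu0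
      rcases lt_trichotomy u 0 with h | h | h
      · have : ∀ x : ℝ, F x u = 0 := fun x =>
          Set.indicator_of_notMem (fun hmem => absurd hmem.1 (not_lt.2 h.le)) _
        simp only [this]
        rw [Set.indicator_of_notMem (by simpa using h.le)]
        exact tendsto_const_nhds
      · exact absurd h (by simpa using hu0)
      · have hev : ∀ᶠ x in (atTop : Filter ℝ), F x u
            = (1 - u / x) * (2 - u / x) ^ m * u ^ m * Real.exp (-u) := by
          filter_upwards [eventually_ge_atTop u] with x hx
          exact Set.indicator_of_mem (Set.mem_Ioc.2 ⟨h, hx⟩) _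
        rw [Set.indicator_of_mem (by simpa using h)]
        refine Tendsto.congr' (hev.mono fun x hx => hx.symm) ?_
        have hdiv : Tendsto (fun x : ℝ => u / x) atTop (nhds 0) :=
          tendsto_const_nhds.div_atTop tendsto_id
        have : Tendsto (fun x : ℝ => (1 - u / x) * (2 - u / x) ^ m * u ^ m * Real.exp (-u))
            atTop (nhds ((1 - 0) * (2 - 0) ^ m * u ^ m * Real.exp (-u))) := by
          exact (((tendsto_const_nhds.sub hdiv).mul ((tendsto_const_nhds.sub hdiv).pow m)).mul
            tendsto_const_nhds).mul tendsto_const_nhds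
        simpa [hf] using this
  have hval : (∫ u, Set.indicator (Ioi (0:ℝ)) f u) = 2 ^ m * m.factorial := by
    rw [MeasureTheory.integral_indicator measurableSet_Ioi]
    simp only [hf]
    simp_rw [mul_assoc]
    rw [MeasureTheory.integral_const_mul]
    congr 1
    rw [← Real.Gamma_nat_eq_factorial, Real.Gamma_eq_integral (by positivity : (0:ℝ) < m + 1)]
    rw [add_sub_cancel_right]
    refine integral_congr_ae (ae_of_all _ fun x => ?_)
    simp only [Real.rpow_natCast]
    ring
  rw [← hval]
  refine key.congr' ?_
  filter_upwards [eventually_ge_atTop (0:ℝ)] with x hx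
  rw [intervalIntegral.integral_of_le hx, ← MeasureTheory.integral_indicator measurableSet_Ioc]

private lemma neg_part_lemma (m : ℕ) :
    Tendsto (fun x : ℝ => (∫ s in (0:ℝ)..1, s * (1 - s ^ 2) ^ m * Real.exp (-(x * s)))
      * x ^ (m + 1) * Real.exp (-x)) atTop (nhds 0) := by
  have hb : ∀ x : ℝ, 0 ≤ x → |∫ s in (0:ℝ)..1, s * (1 - s ^ 2) ^ m * Real.exp (-(x * s))| ≤ 1 := by
    intro x hx
    have := intervalIntegral.norm_integral_le_of_norm_le_const (C := 1)
      (f := fun s : ℝ => s * (1 - s ^ 2) ^ m * Real.exp (-(x * s))) (a := 0) (b := 1) ?_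
    · simpa using this
    · intro s hs
      rw [Set.uIoc_of_le zero_le_one] at hs
      have h1 : 0 < s := hs.1
      have h2 : s ≤ 1 := hs.2
      have h3 : (0:ℝ) ≤ 1 - s ^ 2 := by nlinarith
      have h4 : (1:ℝ) - s ^ 2 ≤ 1 := by nlinarith
      have h5 : Real.exp (-(x * s)) ≤ 1 :=
        Real.exp_le_one_iff.2 (by nlinarith)
      rw [Real.norm_eq_abs, abs_of_nonneg (by positivity)]
      calc s * (1 - s ^ 2) ^ m * Real.exp (-(x * s)) ≤ s * (1 - s^2)^m * 1 := by
            refine mul_le_mul_of_nonneg_left h5 (by positivity)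
        _ ≤ 1 * 1 * 1 := by
            refine mul_le_mul (mul_le_mul h2 (pow_le_one₀ h3 h4) (by positivity) zero_le_one)
              le_rfl zero_le_one (by positivity)
        _ = 1 := by norm_num
  have h0 : Tendsto (fun x : ℝ => x ^ (m + 1) * Real.exp (-x)) atTop (nhds 0) :=
    Real.tendsto_pow_mul_exp_neg_atTop_nhds_zero (m + 1)
  have h0' : Tendsto (fun x : ℝ => ‖x ^ (m + 1) * Real.exp (-x)‖) atTop (nhds 0) := by
    simpa using h0.norm
  refine squeeze_zero_norm' ?_ h0'
  filter_upwards [eventually_ge_atTop (0:ℝ)] with x hx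
  rw [Real.norm_eq_abs, Real.norm_eq_abs, abs_mul, abs_mul]
  calc |∫ s in (0:ℝ)..1, s * (1 - s ^ 2) ^ m * Real.exp (-(x * s))| * |x ^ (m+1)| * |Real.exp (-x)|
      ≤ 1 * |x ^ (m+1)| * |Real.exp (-x)| := by
        have := hb x hx
        gcongr
    _ = |x ^ (m+1) * Real.exp (-x)| := by rw [one_mul, abs_mul]

private lemma main_lemma (m : ℕ) (hm : 1 ≤ m) :
    Tendsto (fun x : ℝ =>
      (∫ s in (0:ℝ)..1, s * (1 - s ^ 2) ^ m * Real.sinh (x * s)) * x ^ (m + 1) * Real.exp (-x)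
        / (2 ^ (m - 1) * (Nat.factorial m : ℝ))) atTop (nhds 1) := by
  have hsplit : ∀ x : ℝ, (∫ s in (0:ℝ)..1, s * (1 - s ^ 2) ^ m * Real.sinh (x * s))
      = ((∫ s in (0:ℝ)..1, s * (1 - s ^ 2) ^ m * Real.exp (x * s))
        - ∫ s in (0:ℝ)..1, s * (1 - s ^ 2) ^ m * Real.exp (-(x * s))) / 2 := by
    intro x
    have hc1 : IntervalIntegrable (fun s : ℝ => s * (1 - s ^ 2) ^ m * Real.exp (x * s))
        volume 0 1 := (Continuous.intervalIntegrable (by continuity) _ _)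
    have hc2 : IntervalIntegrable (fun s : ℝ => s * (1 - s ^ 2) ^ m * Real.exp (-(x * s)))
        volume 0 1 := (Continuous.intervalIntegrable (by continuity) _ _)
    rw [← intervalIntegral.integral_sub hc1 hc2, ← intervalIntegral.integral_div]
    refine intervalIntegral.integral_congr fun s _ => ?_
    rw [Real.sinh_eq]
    ring
  have hA : Tendsto (fun x : ℝ =>
      (∫ s in (0:ℝ)..1, s * (1 - s ^ 2) ^ m * Real.exp (x * s)) * x ^ (m + 1) * Real.exp (-x))
      atTop (nhds (2 ^ m * m.factorial)) := by
    refine (dct_lemma m).congr' ?_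
    filter_upwards [eventually_gt_atTop (0:ℝ)] with x hx
    exact (subst_lemma m x hx).symm
  have hB := neg_part_lemma m
  have hcomb : Tendsto (fun x : ℝ =>
      ((∫ s in (0:ℝ)..1, s * (1 - s ^ 2) ^ m * Real.exp (x * s)) * x ^ (m + 1) * Real.exp (-x)
        - (∫ s in (0:ℝ)..1, s * (1 - s ^ 2) ^ m * Real.exp (-(x * s))) * x ^ (m + 1) * Real.exp (-x))
        / 2 / (2 ^ (m - 1) * (Nat.factorial m : ℝ)))
      atTop (nhds ((2 ^ m * m.factorial - 0) / 2 / (2 ^ (m - 1) * (Nat.factorial m : ℝ)))) :=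
    ((hA.sub hB).div_const 2).div_const _
  have hval : ((2:ℝ) ^ m * m.factorial - 0) / 2 / (2 ^ (m - 1) * (Nat.factorial m : ℝ)) = 1 := by
    have h2 : (2:ℝ) ^ (m - 1) * 2 = 2 ^ m := by
      rw [← pow_succ, Nat.sub_add_cancel hm]
    have hfac : (m.factorial : ℝ) ≠ 0 := Nat.cast_ne_zero.2 m.factorial_ne_zero
    have h2m : (2:ℝ) ^ (m-1) ≠ 0 := by positivity
    rw [sub_zero, ← h2]
    field_simp
  rw [hval] at hcomb
  refine hcomb.congr fun x => ?_
  rw [hsplit x]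
  ring

theorem stmt_2 (m : ℕ) (hm : 1 ≤ m) (η : ℝ) (hη : 0 < η) :
    Filter.Tendsto
      (fun t : ℝ =>
        aCoef m η t * (t * η) ^ (m + 2) * Real.exp (-(t * η)) /
          (η * 2 ^ (m - 1) * (Nat.factorial m : ℝ)))
      Filter.atTop (nhds 1) := by
  have hcomp : Tendsto (fun t : ℝ => η * t) atTop atTop :=
    Tendsto.const_mul_atTop hη tendsto_id
  have hG := (main_lemma m hm).comp hcomp
  refine hG.congr' ?_
  filter_upwards [eventually_gt_atTop (0:ℝ)] with t ht
  simp only [Function.comp_apply, aCoef]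
  have ht0 : t ≠ 0 := ne_of_gt ht
  have hη0 : η ≠ 0 := ne_of_gt hη
  have hfac : (m.factorial : ℝ) ≠ 0 := Nat.cast_ne_zero.2 m.factorial_ne_zero
  have h2m : (2:ℝ) ^ (m-1) ≠ 0 := by positivity
  rw [show t * η = η * t by ring]
  set J := ∫ s in (0:ℝ)..1, s * (1 - s ^ 2) ^ m * Real.sinh (η * t * s) with hJ
  field_simp
  ring

end
end

section
/- Let m ≥ 1 be an integer and 0 < R₁ < R₂. Then, as t → ∞, b_m(t) is asymptotically equivalent to (−1)^m · 2^m · m! · R₁^{m+1} (R₂² − R₁²)^m · e^{−R₁ t}/t^{m+2}; that is, the ratio b_m(t) · t^{m+2} e^{R₁ t} / ((−1)^m 2^m m! R₁^{m+1} (R₂² − R₁²)^m) tends to 1 as t → ∞. -/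
open MeasureTheory

noncomputable section

/-- `b_m(t) = (1/t) ∫_{R₁}^{R₂} s (R₂² − s²)^m (R₁² − s²)^m e^{−st} ds`. -/
def bCoef (m : ℕ) (R₁ R₂ t : ℝ) : ℝ :=
  (1 / t) * ∫ s in R₁..R₂,
    s * (R₂ ^ 2 - s ^ 2) ^ m * (R₁ ^ 2 - s ^ 2) ^ m * Real.exp (-(s * t))

/-- Auxiliary smooth factor: the integrand near `s = R₁` after factoring out `u^m`. -/
def hAux (m : ℕ) (R₁ R₂ u : ℝ) : ℝ :=
  (R₁ + u) * (R₂ ^ 2 - (R₁ + u) ^ 2) ^ m * (-(2 * R₁ + u)) ^ m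

lemma hAux_cont (m : ℕ) (R₁ R₂ : ℝ) : Continuous (hAux m R₁ R₂ ·) := by
  unfold hAux; continuity

/-- The Gamma-type integral: `∫_{0}^{∞} x^m e^{-x} dx = m!`. -/
lemma integral_pow_exp_neg (m : ℕ) :
    ∫ x in Set.Ioi (0:ℝ), x ^ m * Real.exp (-x) = (Nat.factorial m : ℝ) := by
  have h1 : (Nat.factorial m : ℝ) = ∫ x in Set.Ioi (0:ℝ),
      Real.exp (-x) * x ^ (((m : ℝ) + 1) - 1) := by
    rw [← Real.Gamma_nat_eq_factorial m]
    exact Real.Gamma_eq_integral (by positivity)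
  rw [h1]
  refine setIntegral_congr_fun measurableSet_Ioi fun x hx => ?_
  rw [show ((m : ℝ) + 1) - 1 = (m : ℝ) by ring, Real.rpow_natCast]
  ring

lemma integrable_pow_exp_neg (m : ℕ) :
    IntegrableOn (fun x : ℝ => x ^ m * Real.exp (-x)) (Set.Ioi 0) := by
  have := Real.GammaIntegral_convergent (s := (m : ℝ) + 1) (by positivity)
  refine this.congr_fun (fun x hx => ?_) measurableSet_Ioi
  rw [show ((m : ℝ) + 1) - 1 = (m : ℝ) by ring]; beta_reduce; rw [Real.rpow_natCast]
  ring

theorem stmt_3 (m : ℕ) (hm : 1 ≤ m) (R₁ R₂ : ℝ) (hR₁ : 0 < R₁) (hR : R₁ < R₂) :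
    Filter.Tendsto
      (fun t : ℝ =>
        bCoef m R₁ R₂ t * t ^ (m + 2) * Real.exp (R₁ * t) /
          ((-1 : ℝ) ^ m * 2 ^ m * (Nat.factorial m : ℝ) * R₁ ^ (m + 1) *
            (R₂ ^ 2 - R₁ ^ 2) ^ m))
      Filter.atTop (nhds 1) := by
  classical
  set L : ℝ := R₂ - R₁ with hLdef
  have hL0 : 0 < L := sub_pos.2 hR
  set h : ℝ → ℝ := fun u => hAux m R₁ R₂ u with hhdef
  have hcont : Continuous h := hAux_cont m R₁ R₂
  -- the limiting constant
  have hh0 : h 0 = R₁ * (R₂ ^ 2 - R₁ ^ 2) ^ m * (-(2 * R₁)) ^ m := by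
    simp [hhdef, hAux]
  set D : ℝ := (-1 : ℝ) ^ m * 2 ^ m * (Nat.factorial m : ℝ) * R₁ ^ (m + 1) *
      (R₂ ^ 2 - R₁ ^ 2) ^ m with hDdef
  have hDeq : D = h 0 * (Nat.factorial m : ℝ) := by
    have e : (-(2 * R₁)) ^ m = (-1 : ℝ) ^ m * 2 ^ m * R₁ ^ m := by
      rw [show -(2 * R₁) = (-1 : ℝ) * 2 * R₁ by ring, mul_pow, mul_pow]
    rw [hh0, hDdef, e]; ring
  have hR2 : (0:ℝ) < R₂ ^ 2 - R₁ ^ 2 := by nlinarith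
  have hD0 : D ≠ 0 := by
    rw [hDdef]
    refine mul_ne_zero (mul_ne_zero (mul_ne_zero (mul_ne_zero ?_ ?_) ?_) ?_) ?_
    · exact pow_ne_zero _ (by norm_num)
    · positivity
    · exact_mod_cast (Nat.factorial_pos m).ne'
    · positivity
    · positivity
  -- bound for h on [0, L]
  obtain ⟨M0, hM0⟩ := (isCompact_Icc (a := (0:ℝ)) (b := L)).exists_bound_of_continuousOn
    hcont.continuousOn
  set M : ℝ := max M0 0 with hMdef
  have hM : ∀ x ∈ Set.Icc (0:ℝ) L, |h x| ≤ M := fun x hx =>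
    le_trans (by simpa using hM0 x hx) (le_max_left _ _)
  -- the rescaled integrand
  set F : ℝ → ℝ → ℝ := fun t v =>
    Set.indicator (Set.Ioc 0 (t * L)) (fun v => v ^ m * h (v / t) * Real.exp (-v)) v with hFdef
  -- key identity for t > 0
  have key : ∀ t : ℝ, 0 < t →
      bCoef m R₁ R₂ t * t ^ (m + 2) * Real.exp (R₁ * t) = ∫ v, F t v := by
    intro t ht
    have ht' : t ≠ 0 := ht.ne'
    -- step 1: translate the integral to start at 0
    have step1 : (∫ s in R₁..R₂,
        s * (R₂ ^ 2 - s ^ 2) ^ m * (R₁ ^ 2 - s ^ 2) ^ m * Real.exp (-(s * t)))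
        = Real.exp (-(R₁ * t)) * ∫ u in (0:ℝ)..L, u ^ m * h u * Real.exp (-(u * t)) := by
      have := intervalIntegral.integral_comp_add_right (a := (0:ℝ)) (b := L)
        (f := fun s => s * (R₂ ^ 2 - s ^ 2) ^ m * (R₁ ^ 2 - s ^ 2) ^ m * Real.exp (-(s * t)))
        (d := R₁)
      rw [zero_add, hLdef, sub_add_cancel] at this
      rw [← this, ← intervalIntegral.integral_const_mul]
      refine intervalIntegral.integral_congr fun u _ => ?_
      have e1 : R₁ ^ 2 - (u + R₁) ^ 2 = u * (-(2 * R₁ + u)) := by ring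
      have e2 : -((u + R₁) * t) = -(u * t) + -(R₁ * t) := by ring
      rw [e1, e2, mul_pow, Real.exp_add]
      simp only [hhdef, hAux]
      ring
    -- step 2: substitution v = t * u
    have step2 : (∫ u in (0:ℝ)..L, u ^ m * h u * Real.exp (-(u * t)))
        = t⁻¹ * (t ^ m)⁻¹ * ∫ v in (0:ℝ)..(t * L), v ^ m * h (v / t) * Real.exp (-v) := by
      calc (∫ u in (0:ℝ)..L, u ^ m * h u * Real.exp (-(u * t)))
          = ∫ u in (0:ℝ)..L,
              (fun v => (v / t) ^ m * h (v / t) * Real.exp (-v)) (t * u) := by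
            refine intervalIntegral.integral_congr fun u _ => ?_
            simp only
            rw [mul_div_cancel_left₀ u ht', mul_comm t u]
        _ = t⁻¹ • ∫ v in (t * 0)..(t * L), (v / t) ^ m * h (v / t) * Real.exp (-v) := by
            exact intervalIntegral.integral_comp_mul_left
              (fun v => (v / t) ^ m * h (v / t) * Real.exp (-v)) ht'
        _ = t⁻¹ * (t ^ m)⁻¹ * ∫ v in (0:ℝ)..(t * L), v ^ m * h (v / t) * Real.exp (-v) := by
            rw [mul_zero, smul_eq_mul]
            have e : (∫ v in (0:ℝ)..(t * L), (v / t) ^ m * h (v / t) * Real.exp (-v))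
                = (t ^ m)⁻¹ * ∫ v in (0:ℝ)..(t * L), v ^ m * h (v / t) * Real.exp (-v) := by
              rw [← intervalIntegral.integral_const_mul]
              refine intervalIntegral.integral_congr fun v _ => ?_
              rw [div_pow]
              ring
            rw [e]
            ring
    -- step 3: interval integral to indicator integral
    have step3 : (∫ v in (0:ℝ)..(t * L), v ^ m * h (v / t) * Real.exp (-v)) = ∫ v, F t v := by
      rw [intervalIntegral.integral_of_le (by positivity), hFdef,
        MeasureTheory.integral_indicator measurableSet_Ioc]
    rw [bCoef, step1, step2, step3]
    have hexp : Real.exp (-(R₁ * t)) * Real.exp (R₁ * t) = 1 := by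
      rw [← Real.exp_add]; simp
    have ht2 : (1 / t) * t⁻¹ * (t ^ m)⁻¹ * t ^ (m + 2) = 1 := by
      rw [pow_succ, pow_succ]
      field_simp
    set J := ∫ v, F t v with hJ
    calc 1 / t * (Real.exp (-(R₁ * t)) * (t⁻¹ * (t ^ m)⁻¹ * J)) * t ^ (m + 2) *
          Real.exp (R₁ * t)
        = ((1 / t) * t⁻¹ * (t ^ m)⁻¹ * t ^ (m + 2)) *
            (Real.exp (-(R₁ * t)) * Real.exp (R₁ * t)) * J := by ring
      _ = J := by rw [ht2, hexp, one_mul, one_mul]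
  -- dominated convergence
  have hlim : Filter.Tendsto (fun t => ∫ v, F t v) Filter.atTop
      (nhds (∫ v, Set.indicator (Set.Ioi (0:ℝ))
        (fun v => v ^ m * h 0 * Real.exp (-v)) v)) := by
    refine MeasureTheory.tendsto_integral_filter_of_dominated_convergence
      (fun v => Set.indicator (Set.Ioi (0:ℝ)) (fun v => M * (v ^ m * Real.exp (-v))) v)
      ?_ ?_ ?_ ?_
    · -- measurability
      filter_upwards [Filter.eventually_gt_atTop (0:ℝ)] with t ht
      refine (Measurable.indicator ?_ measurableSet_Ioc).aestronglyMeasurable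
      exact ((measurable_id.pow_const m).mul
        ((hcont.measurable).comp (measurable_id.div_const t))).mul
        (Real.measurable_exp.comp measurable_id.neg)
    · -- bound
      filter_upwards [Filter.eventually_gt_atTop (0:ℝ)] with t ht
      refine Filter.Eventually.of_forall fun v => ?_
      by_cases hv : v ∈ Set.Ioc 0 (t * L)
      · rw [hFdef]
        simp only [Set.indicator_of_mem hv]
        have hv' : v ∈ Set.Ioi (0:ℝ) := hv.1
        rw [Set.indicator_of_mem hv']
        have hdiv : v / t ∈ Set.Icc (0:ℝ) L := by
          constructor
          · exact div_nonneg (le_of_lt hv.1) ht.le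
          · rw [div_le_iff₀ ht]; linarith [hv.2]
        have hb := hM _ hdiv
        have hv0 : (0:ℝ) ≤ v := le_of_lt hv.1
        rw [Real.norm_eq_abs, abs_mul, abs_mul, abs_of_nonneg (pow_nonneg hv0 m),
          Real.abs_exp]
        calc v ^ m * |h (v / t)| * Real.exp (-v)
            ≤ v ^ m * M * Real.exp (-v) := by
              have := Real.exp_pos (-v)
              gcongr
          _ = M * (v ^ m * Real.exp (-v)) := by ring
      · rw [hFdef]
        simp only [Set.indicator_of_notMem hv, norm_zero]
        by_cases hv' : v ∈ Set.Ioi (0:ℝ)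
        · rw [Set.indicator_of_mem hv']
          have hvp : (0:ℝ) < v := hv'
          have : (0:ℝ) ≤ M := le_max_right _ _
          positivity
        · rw [Set.indicator_of_notMem hv']
    · -- integrability of bound
      rw [MeasureTheory.integrable_indicator_iff measurableSet_Ioi]
      exact (integrable_pow_exp_neg m).const_mul M
    · -- pointwise limit
      refine Filter.Eventually.of_forall fun v => ?_
      by_cases hv : v ∈ Set.Ioi (0:ℝ)
      · rw [Set.indicator_of_mem hv]
        have hvp : (0:ℝ) < v := hv
        have hev : ∀ᶠ t in Filter.atTop, F t v = v ^ m * h (v / t) * Real.exp (-v) := by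
          filter_upwards [Filter.eventually_ge_atTop (v / L)] with t ht
          have : v ∈ Set.Ioc 0 (t * L) := by
            refine ⟨hvp, ?_⟩
            rw [div_le_iff₀ hL0] at ht
            linarith
          rw [hFdef]; simp only [Set.indicator_of_mem this]
        have h1 : Filter.Tendsto (fun t : ℝ => v / t) Filter.atTop (nhds 0) := by
          have := tendsto_inv_atTop_zero.const_mul v
          simpa [div_eq_mul_inv] using this
        have h2 : Filter.Tendsto (fun t : ℝ => h (v / t)) Filter.atTop (nhds (h 0)) :=
          (hcont.tendsto 0).comp h1
        rw [Filter.tendsto_congr' hev]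
        exact ((h2.const_mul (v ^ m)).mul_const (Real.exp (-v)))
      · rw [Set.indicator_of_notMem hv]
        have hev : ∀ᶠ t in Filter.atTop, F t v = 0 := by
          filter_upwards [Filter.eventually_gt_atTop (0:ℝ)] with t ht
          have : v ∉ Set.Ioc 0 (t * L) := by
            intro hc
            exact hv hc.1
          rw [hFdef]; simp only [Set.indicator_of_notMem this]
        rw [Filter.tendsto_congr' hev]
        exact tendsto_const_nhds
  -- compute the limit integral
  have hval : (∫ v, Set.indicator (Set.Ioi (0:ℝ))
      (fun v => v ^ m * h 0 * Real.exp (-v)) v) = h 0 * (Nat.factorial m : ℝ) := by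
    rw [MeasureTheory.integral_indicator measurableSet_Ioi]
    have : (∫ v in Set.Ioi (0:ℝ), v ^ m * h 0 * Real.exp (-v))
        = h 0 * ∫ v in Set.Ioi (0:ℝ), v ^ m * Real.exp (-v) := by
      rw [← MeasureTheory.integral_const_mul]
      refine setIntegral_congr_fun measurableSet_Ioi fun v _ => by ring
    rw [this, integral_pow_exp_neg]
  -- finish
  have hfinal : Filter.Tendsto (fun t => (∫ v, F t v) / D) Filter.atTop (nhds 1) := by
    have h2 := hlim.div_const D
    rw [hval, ← hDeq, div_self hD0] at h2
    exact h2
  refine hfinal.congr' ?_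
  filter_upwards [Filter.eventually_gt_atTop (0:ℝ)] with t ht
  rw [key t ht]
end
end

section
/- Let m ≥ 1 be an integer, η > 0, p ∈ ℝ³, and ξ ∈ ℝ³ with ξ ≠ 0. Then ∫_{B_η(p)} e^{−i⟨x,ξ⟩} (η² − |x − p|²)^m dx = 4π · η^{2(1+m)} · e^{−i⟨p,ξ⟩} · A_m(|ξ|)/|ξ|, where B_η(p) is the open ball of radius η centered at p, the integral is the (complex-valued) Lebesgue integral over ℝ³, and ⟨·,·⟩ is the Euclidean inner product. -/
open MeasureTheory RealInnerProductSpace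

noncomputable section

/-- `A_m(z) = ∫₀¹ s (1 − s²)^m sin(η z s) ds` (real argument). -/
def Afun (m : ℕ) (η z : ℝ) : ℝ :=
  ∫ s in (0:ℝ)..1, s * (1 - s ^ 2) ^ m * Real.sin (η * z * s)

section helpers
open intervalIntegral Set

lemma hd (m : ℕ) (c : ℝ) (y : ℝ) :
    HasDerivAt (fun y : ℝ => -((c - y^2)^(m+1)) / (2*((m:ℝ)+1))) (y * (c - y^2)^m) y := by
  have h1 : HasDerivAt (fun y : ℝ => c - y^2) (-(2*y)) y := by
    simpa using ((hasDerivAt_pow 2 y).const_sub c)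
  have h2 := (h1.pow (m+1)).neg.div_const (2*((m:ℝ)+1))
  refine h2.congr_deriv ?_
  have hne : (2:ℝ)*((m:ℝ)+1) ≠ 0 := by positivity
  push_cast [Nat.add_sub_cancel]; field_simp

lemma inner2d (m : ℕ) (hm : 1 ≤ m) (η t : ℝ) :
    ∫ y in Ioi (0:ℝ), y * max (η^2 - (t^2 + y^2)) 0 ^ m
      = max (η^2 - t^2) 0 ^ (m+1) / (2*((m:ℝ)+1)) := by
  rcases le_or_gt (η^2) (t^2) with hc | hc
  · have h0 : ∀ y ∈ Ioi (0:ℝ), y * max (η^2 - (t^2 + y^2)) 0 ^ m = 0 := by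
      intro y hy
      have : η^2 - (t^2 + y^2) ≤ 0 := by nlinarith [mem_Ioi.mp hy]
      rw [max_eq_right this, zero_pow (by omega), mul_zero]
    rw [setIntegral_congr_fun measurableSet_Ioi h0, integral_zero,
      max_eq_right (by linarith), zero_pow (by omega), zero_div]
  · set c := η^2 - t^2 with hcdef
    have hc0 : 0 < c := by simp [hcdef]; linarith
    set R := Real.sqrt c with hR
    have hR0 : 0 < R := Real.sqrt_pos.mpr hc0
    have hR2 : R^2 = c := Real.sq_sqrt hc0.le
    set g : ℝ → ℝ := fun y => y * max (η^2 - (t^2 + y^2)) 0 ^ m with hg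
    have hind : (Ioi (0:ℝ)).indicator g = (Ioc (0:ℝ) R).indicator g := by
      funext y
      rcases le_or_gt y 0 with hy | hy
      · rw [indicator_of_notMem (by simpa using hy),
          indicator_of_notMem (fun h => absurd h.1 (not_lt.mpr hy))]
      rcases le_or_gt y R with hyR | hyR
      · rw [indicator_of_mem (mem_Ioi.mpr hy), indicator_of_mem (mem_Ioc.mpr ⟨hy, hyR⟩)]
      · rw [indicator_of_mem (mem_Ioi.mpr hy),
          indicator_of_notMem (fun h => absurd h.2 (not_le.mpr hyR))]
        have : η^2 - (t^2 + y^2) ≤ 0 := by nlinarith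
        rw [hg]; simp only [max_eq_right this, zero_pow (by omega : m ≠ 0), mul_zero]
    rw [← MeasureTheory.integral_indicator measurableSet_Ioi, hind, MeasureTheory.integral_indicator measurableSet_Ioc,
      ← intervalIntegral.integral_of_le hR0.le]
    have hcg : ∀ y ∈ uIcc (0:ℝ) R, g y = y * (c - y^2)^m := by
      intro y hy
      rw [uIcc_of_le hR0.le] at hy
      have h1 : 0 ≤ η^2 - (t^2 + y^2) := by nlinarith [hy.1, hy.2]
      rw [hg]; simp only [max_eq_left h1]; rw [hcdef]; ring
    rw [intervalIntegral.integral_congr hcg]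
    rw [intervalIntegral.integral_eq_sub_of_hasDerivAt (fun y _ => hd m c y)
      (by apply Continuous.intervalIntegrable; continuity)]
    rw [hR2]
    simp only [sub_self, zero_pow (Nat.succ_ne_zero m), sub_zero, zero_pow (two_ne_zero)]
    rw [max_eq_left hc0.le]
    field_simp
    ring

-- L2: odd
lemma Lodd (m : ℕ) (η τ : ℝ) :
    ∫ t in (-η)..η, Real.sin (τ*t) * (η^2 - t^2)^(m+1) = 0 := by
  have h := intervalIntegral.integral_comp_neg (a := -η) (b := η)
    (fun t => Real.sin (τ*t) * (η^2 - t^2)^(m+1))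
  simp only [neg_neg, mul_neg, Real.sin_neg, neg_sq, neg_mul] at h
  rw [intervalIntegral.integral_neg] at h
  linarith

-- L3: even
lemma Leven (m : ℕ) (η τ : ℝ) (hη : 0 ≤ η) :
    ∫ t in (-η)..η, Real.cos (τ*t) * (η^2 - t^2)^(m+1)
      = 2 * ∫ t in (0:ℝ)..η, Real.cos (τ*t) * (η^2 - t^2)^(m+1) := by
  have hi : ∀ a b : ℝ, IntervalIntegrable (fun t => Real.cos (τ*t) * (η^2 - t^2)^(m+1))
      volume a b := fun a b => by apply Continuous.intervalIntegrable; fun_prop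
  have hsplit := intervalIntegral.integral_add_adjacent_intervals (hi (-η) 0) (hi 0 η)
  have h := intervalIntegral.integral_comp_neg (a := 0) (b := η)
    (fun t => Real.cos (τ*t) * (η^2 - t^2)^(m+1))
  simp only [mul_neg, Real.cos_neg, neg_sq, neg_zero] at h
  linarith

-- L4: integration by parts
lemma Libp (m : ℕ) (η τ : ℝ) :
    τ * ∫ t in (0:ℝ)..η, Real.cos (τ*t) * (η^2 - t^2)^(m+1)
      = 2*((m:ℝ)+1) * ∫ t in (0:ℝ)..η, t * (η^2 - t^2)^m * Real.sin (τ*t) := by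
  have hd : ∀ t : ℝ, HasDerivAt (fun t : ℝ => (η^2 - t^2)^(m+1) * Real.sin (τ*t))
      (-(2*((m:ℝ)+1)) * (t * (η^2 - t^2)^m * Real.sin (τ*t))
        + τ * (Real.cos (τ*t) * (η^2 - t^2)^(m+1))) t := by
    intro t
    have h1 : HasDerivAt (fun t : ℝ => η^2 - t^2) (-(2*t)) t := by
      simpa using ((hasDerivAt_pow 2 t).const_sub (η^2))
    have h2 := h1.pow (m+1)
    have h3 : HasDerivAt (fun t : ℝ => Real.sin (τ*t)) (Real.cos (τ*t) * τ) t := by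
      simpa [Function.comp_def] using (Real.hasDerivAt_sin (τ*t)).comp t ((hasDerivAt_id t).const_mul τ)
    have h4 := h2.mul h3
    refine h4.congr_deriv ?_
    push_cast [Nat.add_sub_cancel, Pi.pow_apply]
    ring
  have hcont : IntervalIntegrable (fun t : ℝ =>
      -(2*((m:ℝ)+1)) * (t * (η^2 - t^2)^m * Real.sin (τ*t))
        + τ * (Real.cos (τ*t) * (η^2 - t^2)^(m+1))) volume 0 η := by
    apply Continuous.intervalIntegrable; fun_prop
  have hftc := intervalIntegral.integral_eq_sub_of_hasDerivAt (fun t _ => hd t) hcont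
  have hzero : ((η^2 - η^2)^(m+1) * Real.sin (τ*η)) - ((η^2 - 0^2)^(m+1) * Real.sin (τ*0)) = 0 := by
    simp
  rw [hzero] at hftc
  have hadd : ∫ t in (0:ℝ)..η, (-(2*((m:ℝ)+1)) * (t * (η^2 - t^2)^m * Real.sin (τ*t))
        + τ * (Real.cos (τ*t) * (η^2 - t^2)^(m+1)))
      = (-(2*((m:ℝ)+1))) * (∫ t in (0:ℝ)..η, t * (η^2 - t^2)^m * Real.sin (τ*t))
        + τ * ∫ t in (0:ℝ)..η, Real.cos (τ*t) * (η^2 - t^2)^(m+1) := by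
    rw [intervalIntegral.integral_add]
    · rw [intervalIntegral.integral_const_mul, intervalIntegral.integral_const_mul]
    · apply Continuous.intervalIntegrable; fun_prop
    · apply Continuous.intervalIntegrable; fun_prop
  rw [hadd] at hftc
  linarith

-- L5: substitution
lemma Lsub (m : ℕ) (η τ : ℝ) (hη : 0 < η) :
    η^(2*m+2) * Afun m η τ = ∫ t in (0:ℝ)..η, t * (η^2 - t^2)^m * Real.sin (τ*t) := by
  have h := intervalIntegral.integral_comp_mul_left (a := 0) (b := 1)
    (fun t => t * (η^2 - t^2)^m * Real.sin (τ*t)) (ne_of_gt hη)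
  simp only [mul_zero, mul_one] at h
  have he : ∀ s : ℝ, (η*s) * (η^2 - (η*s)^2)^m * Real.sin (τ*(η*s))
      = η^(2*m+1) * (s * (1 - s^2)^m * Real.sin (η*τ*s)) := by
    intro s
    have : (η^2 - (η*s)^2)^m = (η^2)^m * (1 - s^2)^m := by
      rw [← mul_pow]; ring_nf
    rw [this]
    rw [show η*τ*s = τ*(η*s) by ring]
    rw [show (η^2)^m = η^(2*m) by rw [← pow_mul]]
    ring
  rw [funext he] at h
  rw [intervalIntegral.integral_const_mul, smul_eq_mul] at h
  have h2 : η^(2*m+1) * Afun m η τ = η⁻¹ * ∫ t in (0:ℝ)..η, t * (η^2 - t^2)^m * Real.sin (τ*t) := by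
    rw [Afun]; exact h
  have : η^(2*m+2) = η * η^(2*m+1) := by ring
  rw [this, mul_assoc, h2, ← mul_assoc, mul_inv_cancel₀ (ne_of_gt hη), one_mul]

lemma Lexp (x : ℝ) : Complex.exp (-(Complex.I * (x:ℂ)))
    = ((Real.cos x : ℝ):ℂ) - ((Real.sin x : ℝ):ℂ) * Complex.I := by
  rw [show -(Complex.I * (x:ℂ)) = ((-x : ℝ):ℂ) * Complex.I by push_cast; ring,
    Complex.exp_mul_I, ← Complex.ofReal_cos, ← Complex.ofReal_sin]
  push_cast [Real.cos_neg, Real.sin_neg]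
  ring

lemma Lline (m : ℕ) (η τ : ℝ) (hη : 0 < η) (hτ : τ ≠ 0) :
    ∫ t : ℝ, Complex.exp (-(Complex.I * ((τ*t : ℝ) : ℂ))) * ((max (η^2 - t^2) 0 ^ (m+1) : ℝ) : ℂ)
      = ((4*((m:ℝ)+1)/τ * (η^(2*m+2) * Afun m η τ) : ℝ) : ℂ) := by
  have hcomp : ∀ t : ℝ, t ∉ Ioc (-η) η →
      Complex.exp (-(Complex.I * ((τ*t : ℝ) : ℂ))) * ((max (η^2 - t^2) 0 ^ (m+1) : ℝ) : ℂ) = 0 := by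
    intro t ht
    have h1 : η^2 - t^2 ≤ 0 := by
      rcases not_and_or.mp ht with h | h
      · have := not_lt.mp h; nlinarith
      · have := not_le.mp h; nlinarith
    rw [max_eq_right h1, zero_pow (Nat.succ_ne_zero m)]
    simp
  rw [← setIntegral_eq_integral_of_forall_compl_eq_zero hcomp,
    ← intervalIntegral.integral_of_le (by linarith : -η ≤ η)]
  have hcg : EqOn (fun t : ℝ => Complex.exp (-(Complex.I * ((τ*t : ℝ) : ℂ)))
      * ((max (η^2 - t^2) 0 ^ (m+1) : ℝ) : ℂ))
      (fun t : ℝ => ((Real.cos (τ*t) * (η^2 - t^2)^(m+1) : ℝ) : ℂ)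
        - ((Real.sin (τ*t) * (η^2 - t^2)^(m+1) : ℝ) : ℂ) * Complex.I)
      (uIcc (-η) η) := by
    intro t ht
    rw [uIcc_of_le (by linarith : -η ≤ η)] at ht
    have h1 : 0 ≤ η^2 - t^2 := by nlinarith [ht.1, ht.2]
    simp only [max_eq_left h1, Lexp (τ*t)]
    push_cast
    ring
  rw [intervalIntegral.integral_congr hcg, intervalIntegral.integral_sub, intervalIntegral.integral_mul_const,
    integral_ofReal, integral_ofReal, Lodd m η τ, Leven m η τ hη.le]
  · have hcosval : ∫ t in (0:ℝ)..η, Real.cos (τ*t) * (η^2 - t^2)^(m+1)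
        = 2*((m:ℝ)+1)/τ * (η^(2*m+2) * Afun m η τ) := by
      have := Libp m η τ
      rw [Lsub m η τ hη] at *
      field_simp
      linarith [Libp m η τ]
    rw [hcosval]
    push_cast
    ring
  · apply Continuous.intervalIntegrable
    fun_prop
  · apply Continuous.intervalIntegrable
    fun_prop

lemma vol_ball2 : (volume (Metric.ball (0 : EuclideanSpace ℝ (Fin 2)) 1)).toReal = Real.pi := by
  rw [EuclideanSpace.volume_ball]
  have : (1:ℝ) + 1 = 2 := by norm_num
  simp [Fintype.card_fin, this, Real.Gamma_two, Real.sq_sqrt Real.pi_pos.le,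
    ENNReal.toReal_ofReal Real.pi_pos.le]

lemma norm_sq_eucl {n : ℕ} (v : EuclideanSpace ℝ (Fin n)) : ‖v‖^2 = ∑ j, v j ^ 2 := by
  rw [EuclideanSpace.norm_eq, Real.sq_sqrt (by positivity)]
  simp [sq_abs]

lemma step2d (m : ℕ) (hm : 1 ≤ m) (η t : ℝ) :
    ∫ w : Fin 2 → ℝ, max (η^2 - (t^2 + ∑ j, w j ^ 2)) 0 ^ m
      = Real.pi / ((m:ℝ)+1) * max (η^2 - t^2) 0 ^ (m+1) := by
  have heq : ∫ w : Fin 2 → ℝ, max (η^2 - (t^2 + ∑ j, w j ^ 2)) 0 ^ m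
      = ∫ v : EuclideanSpace ℝ (Fin 2), max (η^2 - (t^2 + ‖v‖ ^ 2)) 0 ^ m := by
    rw [← (EuclideanSpace.volume_preserving_symm_measurableEquiv_toLp (ι := Fin 2)).integral_comp'
      (fun w : Fin 2 → ℝ => max (η^2 - (t^2 + ∑ j, w j ^ 2)) 0 ^ m)]
    congr 1
    funext v
    rw [norm_sq_eucl v]
    rfl
  rw [heq]
  have h := MeasureTheory.integral_fun_norm_addHaar (volume : Measure (EuclideanSpace ℝ (Fin 2)))
    (fun r => max (η^2 - (t^2 + r ^ 2)) 0 ^ m)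
  rw [h, measureReal_def, vol_ball2]
  norm_num [smul_eq_mul]
  rw [inner2d m hm η t]
  have hne : ((m:ℝ)+1) ≠ 0 := by positivity
  field_simp

theorem stmt_4 (m : ℕ) (hm : 1 ≤ m) (η : ℝ) (hη : 0 < η)
    (p ξ : EuclideanSpace ℝ (Fin 3)) (hξ : ξ ≠ 0) :
    (∫ x in Metric.ball p η,
        Complex.exp (-(Complex.I * ((inner ℝ x ξ : ℝ) : ℂ))) *
          (((η ^ 2 - ‖x - p‖ ^ 2) ^ m : ℝ) : ℂ))
      = ((4 * Real.pi * η ^ (2 * (1 + m)) : ℝ) : ℂ) *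
          Complex.exp (-(Complex.I * ((inner ℝ p ξ : ℝ) : ℂ))) *
          ((Afun m η ‖ξ‖ / ‖ξ‖ : ℝ) : ℂ) := by
  have hτ : 0 < ‖ξ‖ := norm_pos_iff.mpr hξ
  set τ : ℝ := ‖ξ‖ with hτdef
  -- orthonormal basis with b 0 in direction ξ
  obtain ⟨b, hb0⟩ : ∃ b : OrthonormalBasis (Fin 3) ℝ (EuclideanSpace ℝ (Fin 3)),
      b 0 = ‖ξ‖⁻¹ • ξ := by
    have hu : ‖(‖ξ‖⁻¹ • ξ : EuclideanSpace ℝ (Fin 3))‖ = 1 := norm_smul_inv_norm hξ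
    have horth : Orthonormal ℝ (({0} : Set (Fin 3)).restrict
        (fun _ : Fin 3 => (‖ξ‖⁻¹ • ξ : EuclideanSpace ℝ (Fin 3)))) := by
      constructor
      · rintro ⟨i, hi⟩; simpa [Set.restrict] using hu
      · rintro ⟨i, hi⟩ ⟨j, hj⟩ hij
        exfalso; apply hij
        simp only [Set.mem_singleton_iff] at hi hj
        exact Subtype.ext (hi.trans hj.symm)
    obtain ⟨b, hb⟩ := horth.exists_orthonormalBasis_extension_of_card_eq
      (by simp [finrank_euclideanSpace])
    exact ⟨b, hb 0 rfl⟩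
  have hinner : ∀ y : EuclideanSpace ℝ (Fin 3), (inner ℝ y ξ : ℝ) = τ * b.repr y 0 := by
    intro y
    rw [b.repr_apply_apply, hb0, real_inner_smul_left, real_inner_comm,
      ← mul_assoc, mul_inv_cancel₀ hτ.ne', one_mul]
  -- step 1: translation
  have step1 : (∫ x in Metric.ball p η,
        Complex.exp (-(Complex.I * ((inner ℝ x ξ : ℝ) : ℂ))) *
          (((η ^ 2 - ‖x - p‖ ^ 2) ^ m : ℝ) : ℂ))
      = ∫ y in Metric.ball (0 : EuclideanSpace ℝ (Fin 3)) η,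
          Complex.exp (-(Complex.I * ((inner ℝ (p + y) ξ : ℝ) : ℂ))) *
            (((η ^ 2 - ‖y‖ ^ 2) ^ m : ℝ) : ℂ) := by
    have hmp : MeasurePreserving (fun y : EuclideanSpace ℝ (Fin 3) => p + y) volume volume :=
      measurePreserving_add_left volume p
    have hemb : MeasurableEmbedding (fun y : EuclideanSpace ℝ (Fin 3) => p + y) :=
      (Homeomorph.addLeft p).measurableEmbedding
    have h := hmp.setIntegral_preimage_emb hemb
      (fun x => Complex.exp (-(Complex.I * ((inner ℝ x ξ : ℝ) : ℂ))) *
        (((η ^ 2 - ‖x - p‖ ^ 2) ^ m : ℝ) : ℂ)) (Metric.ball p η)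
    have hpre : (fun y : EuclideanSpace ℝ (Fin 3) => p + y) ⁻¹' Metric.ball p η
        = Metric.ball 0 η := by
      ext y
      simp [Metric.mem_ball, dist_eq_norm, add_sub_cancel_left]
    rw [hpre] at h
    rw [← h]
    apply setIntegral_congr_fun measurableSet_ball
    intro y _
    simp [add_sub_cancel_left]
  -- step 2: pull out exp(-i⟨p,ξ⟩)
  have step2 : (∫ y in Metric.ball (0 : EuclideanSpace ℝ (Fin 3)) η,
        Complex.exp (-(Complex.I * ((inner ℝ (p + y) ξ : ℝ) : ℂ))) *
          (((η ^ 2 - ‖y‖ ^ 2) ^ m : ℝ) : ℂ))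
      = Complex.exp (-(Complex.I * ((inner ℝ p ξ : ℝ) : ℂ))) *
          ∫ y in Metric.ball (0 : EuclideanSpace ℝ (Fin 3)) η,
            Complex.exp (-(Complex.I * ((inner ℝ y ξ : ℝ) : ℂ))) *
              (((η ^ 2 - ‖y‖ ^ 2) ^ m : ℝ) : ℂ) := by
    rw [← MeasureTheory.integral_const_mul]
    apply setIntegral_congr_fun measurableSet_ball
    intro y _
    dsimp only
    rw [inner_add_left]
    rw [show -(Complex.I * (((inner ℝ p ξ : ℝ) + (inner ℝ y ξ : ℝ) : ℝ) : ℂ))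
        = -(Complex.I * ((inner ℝ p ξ : ℝ) : ℂ)) + -(Complex.I * ((inner ℝ y ξ : ℝ) : ℂ)) by
      push_cast; ring]
    rw [Complex.exp_add, mul_assoc]
  -- step 3: extend to whole space
  have step3 : (∫ y in Metric.ball (0 : EuclideanSpace ℝ (Fin 3)) η,
        Complex.exp (-(Complex.I * ((inner ℝ y ξ : ℝ) : ℂ))) *
          (((η ^ 2 - ‖y‖ ^ 2) ^ m : ℝ) : ℂ))
      = ∫ y : EuclideanSpace ℝ (Fin 3),
          Complex.exp (-(Complex.I * ((inner ℝ y ξ : ℝ) : ℂ))) *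
            ((max (η ^ 2 - ‖y‖ ^ 2) 0 ^ m : ℝ) : ℂ) := by
    rw [setIntegral_congr_fun measurableSet_ball (g := fun y : EuclideanSpace ℝ (Fin 3) =>
      Complex.exp (-(Complex.I * ((inner ℝ y ξ : ℝ) : ℂ))) *
        ((max (η ^ 2 - ‖y‖ ^ 2) 0 ^ m : ℝ) : ℂ))]
    · exact setIntegral_eq_integral_of_forall_compl_eq_zero (fun y hy => by
        have h1 : η ≤ ‖y‖ := by
          simpa [Metric.mem_ball, dist_zero_right] using hy
        have h2 : η ^ 2 - ‖y‖ ^ 2 ≤ 0 := by nlinarith [norm_nonneg y]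
        rw [max_eq_right h2, zero_pow (by omega : m ≠ 0)]
        simp)
    · intro y hy
      have h1 : ‖y‖ < η := by simpa [Metric.mem_ball, dist_zero_right] using hy
      have h2 : 0 ≤ η ^ 2 - ‖y‖ ^ 2 := by nlinarith [norm_nonneg y]
      simp [max_eq_left h2]
  -- step 4: isometry to coordinates
  have step4 : (∫ y : EuclideanSpace ℝ (Fin 3),
        Complex.exp (-(Complex.I * ((inner ℝ y ξ : ℝ) : ℂ))) *
          ((max (η ^ 2 - ‖y‖ ^ 2) 0 ^ m : ℝ) : ℂ))
      = ∫ x : EuclideanSpace ℝ (Fin 3),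
          Complex.exp (-(Complex.I * ((τ * x 0 : ℝ) : ℂ))) *
            ((max (η ^ 2 - ‖x‖ ^ 2) 0 ^ m : ℝ) : ℂ) := by
    rw [← b.measurePreserving_measurableEquiv.integral_comp'
      (fun x : EuclideanSpace ℝ (Fin 3) =>
        Complex.exp (-(Complex.I * ((τ * x 0 : ℝ) : ℂ))) *
          ((max (η ^ 2 - ‖x‖ ^ 2) 0 ^ m : ℝ) : ℂ))]
    congr 1
    funext y
    have hn : ‖(b.measurableEquiv y : EuclideanSpace ℝ (Fin 3))‖ = ‖y‖ := b.repr.norm_map y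
    have hc : b.measurableEquiv y 0 = b.repr y 0 := rfl
    rw [hn, hc, ← hinner y]
  -- step 5: Euclidean → pi
  have step5 : (∫ x : EuclideanSpace ℝ (Fin 3),
        Complex.exp (-(Complex.I * ((τ * x 0 : ℝ) : ℂ))) *
          ((max (η ^ 2 - ‖x‖ ^ 2) 0 ^ m : ℝ) : ℂ))
      = ∫ v : Fin 3 → ℝ,
          Complex.exp (-(Complex.I * ((τ * v 0 : ℝ) : ℂ))) *
            ((max (η ^ 2 - ∑ i, v i ^ 2) 0 ^ m : ℝ) : ℂ) := by
    rw [← (EuclideanSpace.volume_preserving_symm_measurableEquiv_toLp (ι := Fin 3)).integral_comp'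
      (fun v : Fin 3 → ℝ => Complex.exp (-(Complex.I * ((τ * v 0 : ℝ) : ℂ))) *
        ((max (η ^ 2 - ∑ i, v i ^ 2) 0 ^ m : ℝ) : ℂ))]
    congr 1
    funext x
    have h2 : ∑ i, ((MeasurableEquiv.toLp 2 (Fin 3 → ℝ)).symm x) i ^ 2 = ‖x‖ ^ 2 := by
      rw [norm_sq_eucl]
      rfl
    dsimp only
    rw [h2]
    rfl
  -- step 6: Fubini equivalence
  have step6 : (∫ v : Fin 3 → ℝ,
        Complex.exp (-(Complex.I * ((τ * v 0 : ℝ) : ℂ))) *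
          ((max (η ^ 2 - ∑ i, v i ^ 2) 0 ^ m : ℝ) : ℂ))
      = ∫ z : ℝ × (Fin 2 → ℝ),
          Complex.exp (-(Complex.I * ((τ * z.1 : ℝ) : ℂ))) *
            ((max (η ^ 2 - (z.1 ^ 2 + ∑ j, z.2 j ^ 2)) 0 ^ m : ℝ) : ℂ) := by
    have h := ((measurePreserving_piFinSuccAbove (fun _ : Fin 3 => (volume : Measure ℝ))
      0).symm).integral_comp'
      (fun v : Fin 3 → ℝ => Complex.exp (-(Complex.I * ((τ * v 0 : ℝ) : ℂ))) *
        ((max (η ^ 2 - ∑ i, v i ^ 2) 0 ^ m : ℝ) : ℂ))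
    rw [Measure.volume_eq_prod, MeasureTheory.volume_pi]
    exact h.symm.trans rfl
  -- integrability on product
  have hint : Integrable (fun z : ℝ × (Fin 2 → ℝ) =>
      Complex.exp (-(Complex.I * ((τ * z.1 : ℝ) : ℂ))) *
        ((max (η ^ 2 - (z.1 ^ 2 + ∑ j, z.2 j ^ 2)) 0 ^ m : ℝ) : ℂ)) volume := by
    apply Continuous.integrable_of_hasCompactSupport
    · fun_prop
    · apply HasCompactSupport.intro
        ((isCompact_closedBall (0:ℝ) η).prod (isCompact_closedBall (0 : Fin 2 → ℝ) η))
      intro z hz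
      have hcase : η ^ 2 < z.1 ^ 2 + ∑ j, z.2 j ^ 2 := by
        have hsum : (0:ℝ) ≤ ∑ j, z.2 j ^ 2 := Finset.sum_nonneg fun j _ => sq_nonneg _
        rcases not_and_or.mp (fun h => hz (Set.mem_prod.mpr h)) with h | h
        · have h1 : η < |z.1| := by
            simpa [Real.norm_eq_abs] using h
          nlinarith [abs_nonneg z.1, sq_abs z.1]
        · have h1 : η < ‖z.2‖ := by
            simpa using h
          obtain ⟨j, hj⟩ : ∃ j, η < |z.2 j| := by
            by_contra hcon
            push_neg at hcon
            exact absurd (pi_norm_le_iff_of_nonneg hη.le |>.mpr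
              (fun i => by simpa [Real.norm_eq_abs] using hcon i)) (not_le.mpr h1)
          have h2 : z.2 j ^ 2 ≤ ∑ j', z.2 j' ^ 2 :=
            Finset.single_le_sum (f := fun j' => z.2 j' ^ 2)
              (fun i _ => sq_nonneg _) (Finset.mem_univ j)
          nlinarith [abs_nonneg (z.2 j), sq_abs (z.2 j)]
      rw [max_eq_right (by linarith), zero_pow (by omega : m ≠ 0)]
      simp
  -- step 7: Fubini + inner 2D integral + outer 1D integral
  have step7 : (∫ z : ℝ × (Fin 2 → ℝ),
        Complex.exp (-(Complex.I * ((τ * z.1 : ℝ) : ℂ))) *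
          ((max (η ^ 2 - (z.1 ^ 2 + ∑ j, z.2 j ^ 2)) 0 ^ m : ℝ) : ℂ))
      = ((Real.pi / ((m:ℝ)+1) : ℝ) : ℂ) *
          ((4*((m:ℝ)+1)/τ * (η^(2*m+2) * Afun m η τ) : ℝ) : ℂ) := by
    rw [Measure.volume_eq_prod, MeasureTheory.integral_prod _ (by rwa [← Measure.volume_eq_prod])]
    have hin : ∀ t : ℝ, (∫ w : Fin 2 → ℝ,
        Complex.exp (-(Complex.I * ((τ * t : ℝ) : ℂ))) *
          ((max (η ^ 2 - (t ^ 2 + ∑ j, w j ^ 2)) 0 ^ m : ℝ) : ℂ))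
        = ((Real.pi / ((m:ℝ)+1) : ℝ) : ℂ) *
            (Complex.exp (-(Complex.I * ((τ * t : ℝ) : ℂ))) *
              ((max (η ^ 2 - t ^ 2) 0 ^ (m+1) : ℝ) : ℂ)) := by
      intro t
      rw [MeasureTheory.integral_const_mul]
      rw [show (∫ w : Fin 2 → ℝ, ((max (η ^ 2 - (t ^ 2 + ∑ j, w j ^ 2)) 0 ^ m : ℝ) : ℂ))
          = ((∫ w : Fin 2 → ℝ, max (η ^ 2 - (t ^ 2 + ∑ j, w j ^ 2)) 0 ^ m : ℝ) : ℂ) from by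
        exact integral_ofReal]
      rw [step2d m hm η t]
      push_cast
      ring
    simp_rw [hin]
    rw [MeasureTheory.integral_const_mul, Lline m η τ hη hτ.ne']
  -- final assembly
  rw [step1, step2, step3, step4, step5, step6, step7]
  rw [show 2 * (1 + m) = 2 * m + 2 from by ring]
  have hm1 : ((m:ℂ) + 1) ≠ 0 := by
    have : (0:ℝ) < (m:ℝ) + 1 := by positivity
    exact_mod_cast ne_of_gt (by exact_mod_cast this : (0:ℂ).re < ((m:ℝ)+1 : ℝ))
  push_cast
  have hτc : (τ:ℂ) ≠ 0 := by exact_mod_cast hτ.ne'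
  field_simp

end helpers
end
end

section
/- Let f : ℂ → ℂ be an entire function, and suppose there exist constants C > 0 and a ≥ 0 such that |f(z)| ≤ C e^{a · Im z} for all z ∈ ℂ with Im z ≥ 0. Let d > a and τ > 0. Then ∫_{−∞}^{∞} f(r) e^{i d r}/(r² + τ²) dr = (π/τ) · f(iτ) · e^{−dτ}, where the left-hand side is an absolutely convergent complex-valued Lebesgue integral over the real line. -/
open MeasureTheory Complex Filter Set intervalIntegral Topology

noncomputable section

lemma aux_integral_inv (τ : ℝ) (hτ : 0 < τ) :
    ∫ x : ℝ, (x ^ 2 + τ ^ 2)⁻¹ = Real.pi / τ := by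
  have h : ∀ x : ℝ, (x ^ 2 + τ ^ 2)⁻¹ = τ⁻¹ ^ 2 * (1 + (τ⁻¹ * x) ^ 2)⁻¹ := by
    intro x
    rw [eq_comm, mul_inv_eq_iff_eq_mul₀ (by positivity)]
    field_simp; ring
  simp_rw [h]
  rw [MeasureTheory.integral_const_mul,
    Measure.integral_comp_mul_left (fun y => (1 + y ^ 2)⁻¹) τ⁻¹,
    integral_univ_inv_one_add_sq]
  rw [inv_inv, abs_of_pos hτ, smul_eq_mul]
  field_simp

theorem stmt_17 (f : ℂ → ℂ) (hf : Differentiable ℂ f)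
    (C a : ℝ) (hC : 0 < C) (ha : 0 ≤ a)
    (hbound : ∀ z : ℂ, 0 ≤ z.im → ‖f z‖ ≤ C * Real.exp (a * z.im))
    (d τ : ℝ) (hd : a < d) (hτ : 0 < τ) :
    Integrable (fun r : ℝ =>
        f r * Complex.exp (Complex.I * (d : ℂ) * (r : ℂ)) / ((r : ℂ) ^ 2 + (τ : ℂ) ^ 2)) ∧
      (∫ r : ℝ, f r * Complex.exp (Complex.I * (d : ℂ) * (r : ℂ)) / ((r : ℂ) ^ 2 + (τ : ℂ) ^ 2))
        = ((Real.pi / τ : ℝ) : ℂ) * f (Complex.I * (τ : ℂ)) *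
            ((Real.exp (-(d * τ)) : ℝ) : ℂ) := by
  set g : ℂ → ℂ := fun z => f z * Complex.exp (Complex.I * (d : ℂ) * z) with hg_def
  have hg : Differentiable ℂ g := by
    apply hf.mul
    apply Differentiable.cexp
    fun_prop
  set c : ℂ := Complex.I * (τ : ℂ) with hc_def
  have hcim : c.im = τ := by simp [hc_def]
  have hcre : c.re = 0 := by simp [hc_def]
  have habsc : ‖c‖ = τ := by
    simp [hc_def, abs_of_pos hτ]
  -- bound on g in the upper half plane
  have hgb : ∀ z : ℂ, 0 ≤ z.im → ‖g z‖ ≤ C := by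
    intro z hz
    have h1 : ‖Complex.exp (Complex.I * (d : ℂ) * z)‖ =
        Real.exp (-(d * z.im)) := by
      rw [Complex.norm_exp]; congr 1
      simp [Complex.mul_re, Complex.mul_im]
    calc ‖g z‖ = ‖f z‖ * Real.exp (-(d * z.im)) := by
          rw [hg_def]; simp [map_mul, h1]
      _ ≤ (C * Real.exp (a * z.im)) * Real.exp (-(d * z.im)) := by
          apply mul_le_mul_of_nonneg_right (hbound z hz) (Real.exp_nonneg _)
      _ = C * Real.exp ((a - d) * z.im) := by
          rw [mul_assoc, ← Real.exp_add]; ring_nf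
      _ ≤ C * 1 := by
          apply mul_le_mul_of_nonneg_left _ hC.le
          rw [Real.exp_le_one_iff]
          have : a - d ≤ 0 := by linarith
          exact mul_nonpos_of_nonpos_of_nonneg this hz
      _ = C := mul_one C
  set K : ℝ := C + ‖g c‖ with hK_def
  have hK : 0 < K := by positivity
  set H : ℂ → ℂ := fun z => dslope g c z / (z + c) with hH_def
  -- key facts about H
  have hne_add : ∀ z : ℂ, 0 ≤ z.im → z + c ≠ 0 := by
    intro z hz h0
    have : (z + c).im = z.im + τ := by simp [hcim]
    rw [h0] at this
    simp at this
    linarith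
  have hHc : ∀ z : ℂ, 0 ≤ z.im → ContinuousAt H z := by
    intro z hz
    rw [hH_def]
    refine ContinuousAt.div ?_ (by fun_prop) (hne_add z hz)
    rcases eq_or_ne z c with rfl | hzc
    · exact continuousAt_dslope_same.2 (hg c)
    · exact (continuousAt_dslope_of_ne hzc).2 hg.continuous.continuousAt
  have hHd : ∀ z : ℂ, z ≠ c → 0 ≤ z.im → DifferentiableAt ℂ H z := by
    intro z hzc hz
    rw [hH_def]
    refine DifferentiableAt.div ?_ (by fun_prop) (hne_add z hz)
    exact (differentiableAt_dslope_of_ne hzc).2 (hg z)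
  -- H on the real line
  have hHx : ∀ x : ℝ, H x = g x / ((x : ℂ) ^ 2 + (τ : ℂ) ^ 2)
      - g c * (((x : ℂ) ^ 2 + (τ : ℂ) ^ 2))⁻¹ := by
    intro x
    have hxc : (x : ℂ) ≠ c := by
      intro h
      have := congrArg Complex.im h
      simp [hcim] at this
      exact hτ.ne this
    have hsum : (x : ℂ) + c ≠ 0 := hne_add x (by simp)
    have hc2 : c ^ 2 = -(τ : ℂ) ^ 2 := by
      rw [hc_def, mul_pow, Complex.I_sq]; ring
    have hsq : ((x : ℂ) - c) * ((x : ℂ) + c) = (x : ℂ) ^ 2 + (τ : ℂ) ^ 2 := by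
      linear_combination -hc2
    have hsqne : ((x : ℂ) ^ 2 + (τ : ℂ) ^ 2) ≠ 0 := by
      rw [← hsq]; exact mul_ne_zero (sub_ne_zero.2 hxc) hsum
    rw [hH_def]
    simp only
    rw [dslope_of_ne g hxc, slope_def_field]
    rw [div_div, hsq, sub_div, div_eq_mul_inv (g c)]
  -- integrability facts
  set m : ℝ := min 1 (τ ^ 2) with hm_def
  have hm : 0 < m := by positivity
  have hmle : ∀ x : ℝ, m * (1 + x ^ 2) ≤ x ^ 2 + τ ^ 2 := by
    intro x
    have h1 : m ≤ 1 := min_le_left _ _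
    have h2 : m ≤ τ ^ 2 := min_le_right _ _
    nlinarith [sq_nonneg x]
  have habs_sq : ∀ x : ℝ, ‖(x : ℂ) ^ 2 + (τ : ℂ) ^ 2‖ = x ^ 2 + τ ^ 2 := by
    intro x
    have h : ((x : ℂ) ^ 2 + (τ : ℂ) ^ 2) = ((x ^ 2 + τ ^ 2 : ℝ) : ℂ) := by push_cast; ring
    rw [h, Complex.norm_real, Real.norm_eq_abs, abs_of_pos (by positivity)]
  have hden_ne : ∀ x : ℝ, ((x : ℂ) ^ 2 + (τ : ℂ) ^ 2) ≠ 0 := by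
    intro x h0
    have := habs_sq x
    rw [h0] at this
    simp at this
    nlinarith
  have hinv_le : ∀ x : ℝ, (x ^ 2 + τ ^ 2)⁻¹ ≤ m⁻¹ * (1 + x ^ 2)⁻¹ := by
    intro x
    rw [← mul_inv]
    exact inv_anti₀ (by positivity) (hmle x)
  have hA_int : Integrable (fun x : ℝ => g x / ((x : ℂ) ^ 2 + (τ : ℂ) ^ 2)) := by
    apply Integrable.mono' ((integrable_inv_one_add_sq).const_mul (C * m⁻¹))
    · apply Continuous.aestronglyMeasurable
      exact (hg.continuous.comp Complex.continuous_ofReal).div (by fun_prop) hden_ne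
    · refine ae_of_all _ fun x => ?_
      rw [norm_div, habs_sq]
      rw [div_eq_mul_inv, mul_assoc]
      refine mul_le_mul (hgb x (by simp)) (hinv_le x) (by positivity) hC.le
  have hB_int : Integrable (fun x : ℝ => (((x : ℂ) ^ 2 + (τ : ℂ) ^ 2))⁻¹) := by
    apply Integrable.mono' ((integrable_inv_one_add_sq).const_mul m⁻¹)
    · apply Continuous.aestronglyMeasurable
      exact Continuous.inv₀ (by fun_prop) hden_ne
    · refine ae_of_all _ fun x => ?_
      rw [norm_inv, habs_sq]
      exact hinv_le x
  have hH_int : Integrable (fun x : ℝ => H x) := by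
    have he : (fun x : ℝ => H x) = fun x : ℝ => g x / ((x : ℂ) ^ 2 + (τ : ℂ) ^ 2)
        - g c * (((x : ℂ) ^ 2 + (τ : ℂ) ^ 2))⁻¹ := funext hHx
    rw [he]
    exact hA_int.sub (hB_int.const_mul (g c))
  -- the crucial pointwise bound
  have hHbound : ∀ R : ℝ, max (2 * τ) 1 ≤ R → ∀ z : ℂ, 0 ≤ z.im → R ≤ ‖z‖ →
      ‖H z‖ ≤ 4 * K / R ^ 2 := by
    intro R hR z hz hRz
    have hR1 : (1 : ℝ) ≤ R := le_trans (le_max_right _ _) hR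
    have hR2τ : 2 * τ ≤ R := le_trans (le_max_left _ _) hR
    have hzc : z ≠ c := by
      intro h; rw [h, habsc] at hRz; linarith
    have hd1 : R / 2 ≤ ‖z - c‖ := by
      have h := norm_sub_norm_le z c
      rw [habsc] at h
      linarith
    have hd2 : R / 2 ≤ ‖z + c‖ := by
      have h := norm_sub_norm_le z (-c)
      rw [sub_neg_eq_add, norm_neg] at h
      rw [habsc] at h
      linarith
    have hnum : ‖g z - g c‖ ≤ K := by
      have h := norm_sub_le (g z) (g c)
      have h2 := hgb z hz
      rw [hK_def]
      linarith
    have heq : ‖H z‖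
        = ‖g z - g c‖ / (‖z - c‖ * ‖z + c‖) := by
      rw [hH_def]
      simp only
      rw [dslope_of_ne g hzc, slope_def_field, div_div, norm_div, norm_mul]
    rw [heq]
    calc ‖g z - g c‖ / (‖z - c‖ * ‖z + c‖)
        ≤ K / (R / 2 * (R / 2)) := by
          apply div_le_div₀ hK.le hnum (by positivity)
          exact mul_le_mul hd1 hd2 (by positivity) (norm_nonneg _)
      _ = 4 * K / R ^ 2 := by
          field_simp
          ring
  -- contour identity
  have hContour : ∀ R : ℝ, max (2 * τ) 1 ≤ R →
      (∫ x in (-R)..R, H x) =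
        (∫ x in (-R)..R, H (x + R * Complex.I))
        - Complex.I * (∫ y in (0 : ℝ)..R, H (R + y * Complex.I))
        + Complex.I * (∫ y in (0 : ℝ)..R, H (-R + y * Complex.I)) := by
    intro R hR
    have hR1 : (1 : ℝ) ≤ R := le_trans (le_max_right _ _) hR
    have hR0 : (0 : ℝ) < R := by linarith
    have key := Complex.integral_boundary_rect_eq_zero_of_differentiable_on_off_countable H
      (-(R : ℂ)) ((R : ℂ) + (R : ℂ) * Complex.I) {c} (Set.countable_singleton c) ?_ ?_
    · simp only [neg_im, ofReal_im, neg_zero, ofReal_zero, zero_mul, add_zero, neg_re,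
        ofReal_re, add_re, mul_re, I_re, mul_zero, I_im, tsub_zero, add_im, mul_im,
        mul_one, zero_add, smul_eq_mul, ofReal_neg] at key
      linear_combination key
    · -- continuity on the rectangle
      intro ζ hζ
      rw [Complex.mem_reProdIm] at hζ
      have h2 := hζ.2
      simp only [neg_im, ofReal_im, neg_zero, add_im, mul_im, I_im, ofReal_re, mul_one,
        I_re, mul_zero, zero_add, add_zero] at h2
      rw [Set.uIcc_of_le hR0.le] at h2
      exact (hHc ζ h2.1).continuousWithinAt
    · -- differentiability off {c}
      intro ζ hζ
      obtain ⟨hζ1, hζ2⟩ := hζ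
      rw [Complex.mem_reProdIm] at hζ1
      have h2 := hζ1.2
      simp only [neg_im, ofReal_im, neg_zero, add_im, mul_im, I_im, ofReal_re, mul_one,
        I_re, mul_zero, zero_add, add_zero, min_self, max_self] at h2
      rw [min_eq_left hR0.le, max_eq_right hR0.le] at h2
      exact hHd ζ (by simpa using hζ2) h2.1.le
  -- squeeze to zero
  have hTendsto0 : Tendsto (fun R : ℝ => ∫ x in (-R)..R, H x) atTop (𝓝 0) := by
    have hlim : Tendsto (fun R : ℝ => 16 * K / R) atTop (𝓝 0) :=
      Tendsto.div_atTop tendsto_const_nhds tendsto_id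
    apply squeeze_zero_norm' _ hlim
    · filter_upwards [eventually_ge_atTop (max (2 * τ) 1)] with R hR
      have hR1 : (1 : ℝ) ≤ R := le_trans (le_max_right _ _) hR
      have hR0 : (0 : ℝ) < R := by linarith
      have hb := hHbound R hR
      have hb4 : 0 ≤ 4 * K / R ^ 2 := by positivity
      rw [hContour R hR]
      have hTop : ‖∫ x in (-R)..R, H (x + R * Complex.I)‖ ≤ 4 * K / R ^ 2 * |R - (-R)| := by
        apply intervalIntegral.norm_integral_le_of_norm_le_const
        intro x hx
        apply hb
        · simp [hR0.le]
        · calc R = |R| := (abs_of_pos hR0).symm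
            _ = |((x : ℂ) + (R : ℂ) * Complex.I).im| := by simp
            _ ≤ ‖_‖ := Complex.abs_im_le_norm _
      have hRight : ‖∫ y in (0 : ℝ)..R, H (R + y * Complex.I)‖ ≤ 4 * K / R ^ 2 * |R - 0| := by
        apply intervalIntegral.norm_integral_le_of_norm_le_const
        intro y hy
        rw [Set.uIoc_of_le hR0.le] at hy
        apply hb
        · simp [hy.1.le]
        · calc R = |R| := (abs_of_pos hR0).symm
            _ = |((R : ℂ) + (y : ℂ) * Complex.I).re| := by simp
            _ ≤ ‖_‖ := Complex.abs_re_le_norm _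
      have hLeft : ‖∫ y in (0 : ℝ)..R, H (-R + y * Complex.I)‖ ≤ 4 * K / R ^ 2 * |R - 0| := by
        apply intervalIntegral.norm_integral_le_of_norm_le_const
        intro y hy
        rw [Set.uIoc_of_le hR0.le] at hy
        apply hb
        · simp [hy.1.le]
        · calc R = |R| := (abs_of_pos hR0).symm
            _ = |(-(R : ℂ) + (y : ℂ) * Complex.I).re| := by simp [abs_of_pos hR0]
            _ ≤ ‖_‖ := Complex.abs_re_le_norm _
      have habs2R : |R - (-R)| = 2 * R := by rw [abs_of_pos (by linarith)]; ring
      have habsR : |R - (0 : ℝ)| = R := by rw [sub_zero, abs_of_pos hR0]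
      calc ‖(∫ x in (-R)..R, H (x + R * Complex.I))
            - Complex.I * (∫ y in (0 : ℝ)..R, H (R + y * Complex.I))
            + Complex.I * (∫ y in (0 : ℝ)..R, H (-R + y * Complex.I))‖
          ≤ ‖(∫ x in (-R)..R, H (x + R * Complex.I))
            - Complex.I * (∫ y in (0 : ℝ)..R, H (R + y * Complex.I))‖
            + ‖Complex.I * (∫ y in (0 : ℝ)..R, H (-R + y * Complex.I))‖ := norm_add_le _ _
        _ ≤ ‖(∫ x in (-R)..R, H (x + R * Complex.I))‖
            + ‖Complex.I * (∫ y in (0 : ℝ)..R, H (R + y * Complex.I))‖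
            + ‖Complex.I * (∫ y in (0 : ℝ)..R, H (-R + y * Complex.I))‖ := by
              have := norm_sub_le (∫ x in (-R)..R, H (x + R * Complex.I))
                (Complex.I * (∫ y in (0 : ℝ)..R, H (R + y * Complex.I)))
              linarith
        _ = ‖(∫ x in (-R)..R, H (x + R * Complex.I))‖
            + ‖(∫ y in (0 : ℝ)..R, H (R + y * Complex.I))‖
            + ‖(∫ y in (0 : ℝ)..R, H (-R + y * Complex.I))‖ := by
              rw [norm_mul, norm_mul, Complex.norm_I, one_mul, one_mul]
        _ ≤ 4 * K / R ^ 2 * (2 * R) + 4 * K / R ^ 2 * R + 4 * K / R ^ 2 * R := by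
              rw [habs2R] at hTop
              rw [habsR] at hRight hLeft
              linarith
        _ = 16 * K / R := by field_simp; ring
  have hHzero : (∫ x : ℝ, H x) = 0 :=
    tendsto_nhds_unique
      (intervalIntegral_tendsto_integral hH_int tendsto_neg_atTop_atBot tendsto_id) hTendsto0
  -- evaluate the Poisson integral
  have hBval : (∫ x : ℝ, (((x : ℂ) ^ 2 + (τ : ℂ) ^ 2))⁻¹) = ((Real.pi / τ : ℝ) : ℂ) := by
    have h : ∀ x : ℝ, (((x : ℂ) ^ 2 + (τ : ℂ) ^ 2))⁻¹ = (((x ^ 2 + τ ^ 2)⁻¹ : ℝ) : ℂ) := by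
      intro x; push_cast; ring
    simp_rw [h]
    rw [← aux_integral_inv τ hτ]
    exact _root_.integral_ofReal
  have hsplit : (∫ x : ℝ, H x) = (∫ x : ℝ, g x / ((x : ℂ) ^ 2 + (τ : ℂ) ^ 2))
      - g c * ∫ x : ℝ, (((x : ℂ) ^ 2 + (τ : ℂ) ^ 2))⁻¹ := by
    simp_rw [hHx]
    rw [integral_sub hA_int (hB_int.const_mul (g c)), MeasureTheory.integral_const_mul]
  have hAval : (∫ x : ℝ, g x / ((x : ℂ) ^ 2 + (τ : ℂ) ^ 2))
      = g c * ((Real.pi / τ : ℝ) : ℂ) := by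
    rw [hHzero, hBval] at hsplit
    linear_combination -hsplit
  have hInteg : (fun r : ℝ => f r * Complex.exp (Complex.I * (d : ℂ) * (r : ℂ))
      / ((r : ℂ) ^ 2 + (τ : ℂ) ^ 2)) = fun x : ℝ => g x / ((x : ℂ) ^ 2 + (τ : ℂ) ^ 2) := rfl
  have harg : Complex.I * (d : ℂ) * c = ((-(d * τ) : ℝ) : ℂ) := by
    rw [hc_def]
    push_cast
    rw [show Complex.I * (d : ℂ) * (Complex.I * (τ : ℂ))
        = Complex.I ^ 2 * ((d : ℂ) * (τ : ℂ)) by ring, Complex.I_sq]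
    ring
  have hgc : g c = f c * ((Real.exp (-(d * τ)) : ℝ) : ℂ) := by
    show f c * Complex.exp (Complex.I * (d : ℂ) * c) = _
    rw [harg, Complex.ofReal_exp]
  refine ⟨by rw [hInteg]; exact hA_int, ?_⟩
  rw [hInteg, hAval, hgc]
  ring
end
end
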